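/- arXiv:2311.15234 — 7 statements merged into one kernel-verified Lean document; each statement's English description precedes it below -/
import Mathlib

section
/- Let X be the Cantor space over a finite alphabet 𝒜. For a closed set K ⊆ X the following are equivalent: (1) K is upper computable, i.e. there exists a Σ₁ (r.e.) set W of finite words over 𝒜 such that X ∖ K = ⋃_{w ∈ W} [w]; (2) K is recursively compact, i.e. the set {L : L a finite list of words over 𝒜 with K ⊆ ⋃_{w ∈ L} [w]} is Σ₁ (r.e.). -/
open Filter Topology MeasureTheory Set
open scoped ENNReal NNReal

/-- Cylinder of a finite word in Cantor space: the set of sequences beginning with `w`. -/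
def cyl {𝒜 : Type*} (w : List 𝒜) : Set (ℕ → 𝒜) :=
  {x | ∀ i : Fin w.length, x i = w.get i}

/-- The shift map on Cantor space. -/
def shiftMap {𝒜 : Type*} (x : ℕ → 𝒜) : ℕ → 𝒜 := fun i => x (i + 1)

/-- ω-limit set of `x` under iteration of `T`: the set of accumulation points of the orbit. -/
def omegaSet {X : Type*} [TopologicalSpace X] (T : X → X) (x : X) : Set X :=
  {y | MapClusterPt y Filter.atTop fun n => T^[n] x}

/-- Realm of attraction `ρ(A) = {x : ω(x) ⊆ A}`. -/
def realm {X : Type*} [TopologicalSpace X] (T : X → X) (A : Set X) : Set X :=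
  {x | omegaSet T x ⊆ A}

/-- `A` is a topological attractor of `T`: a closed invariant set whose realm of attraction is
residual, and such that no strictly smaller closed subset has nonmeager realm of attraction. -/
def IsTopAttractor {X : Type*} [TopologicalSpace X] (T : X → X) (A : Set X) : Prop :=
  IsClosed A ∧ Set.MapsTo T A A ∧ realm T A ∈ residual X ∧
    ∀ A' : Set X, IsClosed A' → A' ⊂ A → IsMeagre (realm T A')

/-- `A` is a metric attractor of `T` w.r.t. `lam`: a closed invariant set whose realm of
attraction has full measure, and no strictly smaller closed subset has realm of positive
measure. -/
def IsMetricAttractor {X : Type*} [TopologicalSpace X] [MeasurableSpace X]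
    (T : X → X) (lam : Measure X) (A : Set X) : Prop :=
  IsClosed A ∧ Set.MapsTo T A A ∧ lam (realm T A) = 1 ∧
    ∀ A' : Set X, IsClosed A' → A' ⊂ A → lam (realm T A') = 0

/-- Empirical (Birkhoff) measures `ν_n(x) = (1/n) ∑_{i<n} δ_{T^i x}`. -/
noncomputable def empMeasure {X : Type*} [MeasurableSpace X] (T : X → X) (x : X) (n : ℕ) :
    Measure X :=
  (n : ℝ≥0∞)⁻¹ • ∑ i ∈ Finset.range n, Measure.dirac (T^[i] x)

/-- Weak-* convergence of a sequence of measures: integrals of continuous functions converge. -/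
def WeakTendsto {X : Type*} [TopologicalSpace X] [MeasurableSpace X]
    (μs : ℕ → Measure X) (μ : Measure X) : Prop :=
  ∀ φ : C(X, ℝ), Filter.Tendsto (fun n => ∫ x, φ x ∂(μs n)) Filter.atTop (nhds (∫ x, φ x ∂μ))

/-- Topological support of a measure: points all of whose open neighbourhoods have positive
measure. -/
def measSupport {X : Type*} [TopologicalSpace X] [MeasurableSpace X]
    (μ : Measure X) : Set X :=
  {x | ∀ U : Set X, IsOpen U → x ∈ U → 0 < μ U}

/-- `A` is a statistical (physical) attractor of `T` w.r.t. `lam`: there is a `T`-invariant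
probability measure `μ` with support `A` such that for `lam`-a.e. `x` the empirical measures
converge weak-* to `μ`. -/
def IsStatAttractor {X : Type*} [TopologicalSpace X] [MeasurableSpace X]
    (T : X → X) (lam : Measure X) (A : Set X) : Prop :=
  IsClosed A ∧ ∃ μ : Measure X, IsProbabilityMeasure μ ∧
    Measure.map T μ = μ ∧ measSupport μ = A ∧
    ∀ᵐ x ∂lam, WeakTendsto (empMeasure T x) μ

/-- `A` is strongly attracting: there is an open `U ⊇ A` with `T (closure U) ⊆ U` and
`A = ⋂ₙ Tⁿ(U)`. -/
def StronglyAttracting {X : Type*} [TopologicalSpace X] (T : X → X) (A : Set X) : Prop :=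
  ∃ U : Set X, IsOpen U ∧ A ⊆ U ∧ T '' (closure U) ⊆ U ∧ A = ⋂ n : ℕ, T^[n] '' U

/-- `S` is Σ₁ (recursively enumerable). -/
def SigmaOne {I : Type*} [Primcodable I] (S : Set I) : Prop :=
  ∃ f : I × ℕ → Bool, Computable f ∧ ∀ i, i ∈ S ↔ ∃ a, f (i, a) = true

/-- `S` is Π₁ (co-r.e.). -/
def PiOne {I : Type*} [Primcodable I] (S : Set I) : Prop := SigmaOne Sᶜ

/-- `S` is Σ₂. -/
def SigmaTwo {I : Type*} [Primcodable I] (S : Set I) : Prop :=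
  ∃ f : I × ℕ × ℕ → Bool, Computable f ∧ ∀ i, i ∈ S ↔ ∃ a, ∀ b, f (i, a, b) = true

/-- `S` is Π₂. -/
def PiTwo {I : Type*} [Primcodable I] (S : Set I) : Prop :=
  ∃ f : I × ℕ × ℕ → Bool, Computable f ∧ ∀ i, i ∈ S ↔ ∀ a, ∃ b, f (i, a, b) = true

/-- A map of Cantor space is computable if `(T x) n` is computed by a computable function from
`n` and the finite prefix `[x 0, …, x (α n)]` of `x`, for a computable modulus `α`. -/
def CantorComputable {𝒜 : Type} [Primcodable 𝒜] (T : (ℕ → 𝒜) → (ℕ → 𝒜)) : Prop :=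
  ∃ (α : ℕ → ℕ) (β : ℕ → List 𝒜 → 𝒜), Computable α ∧ Computable₂ β ∧
    ∀ (x : ℕ → 𝒜) (n : ℕ), T x n = β n (List.ofFn fun i : Fin (α n + 1) => x i)

/-- A Borel probability measure on Cantor space is computable if the measures of finite unions
of cylinders are uniformly lower-computable: `lam(⋃_{w ∈ W} [w]) = sup_k q (W, k)` for a
computable `q`. -/
def ComputableCantorMeasure {𝒜 : Type} [Primcodable 𝒜] [MeasurableSpace 𝒜]
    (lam : Measure (ℕ → 𝒜)) : Prop :=
  ∃ q : List (List 𝒜) × ℕ → ℚ, Computable q ∧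
    ∀ W : List (List 𝒜), (lam (⋃ w ∈ W, cyl w)).toReal = ⨆ k, (q (W, k) : ℝ)

/-- Indices of machines halting on input 0. -/
def HaltSet : Set ℕ := {e | ((Denumerable.ofNat Nat.Partrec.Code e).eval 0).Dom}

/-- Indices of total machines. -/
def TotSet : Set ℕ := {e | ∀ n, ((Denumerable.ofNat Nat.Partrec.Code e).eval n).Dom}

/-- Indices of machines with finite domain. -/
def FinSet : Set ℕ := {e | {n | ((Denumerable.ofNat Nat.Partrec.Code e).eval n).Dom}.Finite}

set_option linter.unusedSectionVars false

namespace CantorAux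

variable {𝒜 : Type} [Fintype 𝒜]

noncomputable def univListC (𝒜 : Type) [Fintype 𝒜] : List 𝒜 := Finset.univ.toList

noncomputable def allWordsC (𝒜 : Type) [Fintype 𝒜] : ℕ → List (List 𝒜) :=
  Nat.rec [[]] fun _ IH => IH.flatMap fun v => (univListC 𝒜).map fun a => a :: v

@[simp] theorem allWordsC_zero : allWordsC 𝒜 0 = [[]] := rfl

@[simp] theorem allWordsC_succ (n : ℕ) :
    allWordsC 𝒜 (n + 1) = (allWordsC 𝒜 n).flatMap fun v => (univListC 𝒜).map fun a => a :: v :=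
  rfl

theorem mem_allWordsC {v : List 𝒜} {n : ℕ} : v ∈ allWordsC 𝒜 n ↔ v.length = n := by
  induction n generalizing v with
  | zero => simp [List.length_eq_zero_iff]
  | succ n ih =>
    simp only [allWordsC_succ, List.mem_flatMap, List.mem_map]
    constructor
    · rintro ⟨w, hw, a, -, rfl⟩
      simp [ih.1 hw]
    · intro hv
      match v, hv with
      | a :: v, hv =>
        exact ⟨v, ih.2 (by simpa using hv), a, by simp [univListC], rfl⟩

def prefB [DecidableEq 𝒜] (w v : List 𝒜) : Bool :=
  (List.range w.length).all fun i => decide (w[i]? = v[i]?)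

theorem prefB_iff [DecidableEq 𝒜] {w v : List 𝒜} : prefB w v = true ↔ w <+: v := by
  simp only [prefB, List.all_eq_true, List.mem_range, decide_eq_true_eq]
  constructor
  · intro h
    have hlen : w.length ≤ v.length := by
      by_contra hlt
      push_neg at hlt
      have h2 := h v.length hlt
      rw [List.getElem?_eq_none_iff.2 le_rfl] at h2
      have h3 : w.length ≤ v.length := List.getElem?_eq_none_iff.1 h2
      omega
    rw [List.prefix_iff_eq_take]
    refine List.ext_getElem? fun i => ?_
    rcases lt_or_ge i w.length with hi | hi
    · rw [List.getElem?_take_of_lt hi, h i hi]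
    · rw [List.getElem?_eq_none_iff.2 hi, List.getElem?_eq_none_iff.2 (by simp; omega)]
  · intro h i hi
    rw [List.getElem?_eq_getElem hi, List.getElem?_eq_getElem (lt_of_lt_of_le hi h.length_le)]
    exact congrArg some (by simpa using h.getElem hi)


noncomputable def complListC [DecidableEq 𝒜] (w : List 𝒜) : List (List 𝒜) :=
  (allWordsC 𝒜 w.length).flatMap fun v => if v = w then [] else [v]

theorem mem_complListC [DecidableEq 𝒜] {w v : List 𝒜} :
    v ∈ complListC w ↔ v.length = w.length ∧ v ≠ w := by
  simp only [complListC, List.mem_flatMap]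
  constructor
  · rintro ⟨u, hu, hv⟩
    split_ifs at hv with h
    · simp at hv
    · simp only [List.mem_singleton] at hv
      subst hv
      exact ⟨mem_allWordsC.1 hu, h⟩
  · rintro ⟨h1, h2⟩
    exact ⟨v, mem_allWordsC.2 h1, by simp [h2]⟩

noncomputable def bigPairsC (𝒜 : Type) [Fintype 𝒜] (s : ℕ) : List (List 𝒜 × ℕ) :=
  ((List.range (s + 1)).flatMap (allWordsC 𝒜)).flatMap fun w =>
    (List.range (s + 1)).map fun a => (w, a)

theorem mem_bigPairsC {s : ℕ} {p : List 𝒜 × ℕ} :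
    p ∈ bigPairsC 𝒜 s ↔ p.1.length ≤ s ∧ p.2 ≤ s := by
  obtain ⟨w, a⟩ := p
  simp only [bigPairsC, List.mem_flatMap, List.mem_map, List.mem_range]
  constructor
  · rintro ⟨u, ⟨n, hn, hu⟩, a', ha', h⟩
    rw [Prod.mk.injEq] at h
    obtain ⟨rfl, rfl⟩ := h
    have := mem_allWordsC.1 hu
    omega
  · rintro ⟨h1, h2⟩
    exact ⟨w, ⟨w.length, by omega, mem_allWordsC.2 rfl⟩, a, by omega, rfl⟩

section Top
variable [TopologicalSpace 𝒜] [DiscreteTopology 𝒜]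

theorem isOpen_cyl (w : List 𝒜) : IsOpen (cyl w) := by
  have : cyl w = ⋂ i : Fin w.length, (fun x : ℕ → 𝒜 => x i) ⁻¹' {w.get i} := by
    ext x; simp [cyl, Set.mem_iInter]
  rw [this]
  exact isOpen_iInter_of_finite fun i =>
    (continuous_apply (i : ℕ)).isOpen_preimage _ (isOpen_discrete _)

theorem cyl_anti {w v : List 𝒜} (h : w <+: v) : cyl v ⊆ cyl w := by
  intro x hx i
  have hi : (i : ℕ) < v.length := lt_of_lt_of_le i.2 h.length_le
  have := hx ⟨i, hi⟩
  simp only [List.get_eq_getElem] at this ⊢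
  rw [this, h.getElem i.2]

theorem mem_cyl_ofFn (x : ℕ → 𝒜) (n : ℕ) : x ∈ cyl (List.ofFn fun i : Fin n => x i) := by
  intro i
  simp [List.get_ofFn]

theorem exists_cyl_subset {U : Set (ℕ → 𝒜)} (hU : IsOpen U) {x : ℕ → 𝒜} (hx : x ∈ U) :
    ∃ n : ℕ, cyl (List.ofFn fun i : Fin n => x i) ⊆ U := by
  rw [isOpen_pi_iff] at hU
  obtain ⟨I, u, h1, h2⟩ := hU x hx
  refine ⟨(I.sup id) + 1, fun y hy => h2 ?_⟩
  intro i hi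
  have hilt : i < I.sup id + 1 := Nat.lt_succ_of_le (Finset.le_sup (f := id) hi)
  have := hy ⟨i, by simpa using hilt⟩
  simp only [List.get_ofFn, List.length_ofFn] at this
  rw [this]
  exact (h1 i hi).2

theorem compl_cyl [DecidableEq 𝒜] (w : List 𝒜) :
    (cyl w)ᶜ = ⋃ v ∈ complListC w, cyl v := by
  ext x
  simp only [Set.mem_compl_iff, Set.mem_iUnion, mem_complListC]
  constructor
  · intro hx
    refine ⟨List.ofFn fun i : Fin w.length => x i, ⟨by simp, ?_⟩, mem_cyl_ofFn x _⟩
    intro h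
    apply hx
    intro i
    have h9 : (List.ofFn fun j : Fin w.length => x j)[(i : ℕ)]? = w[(i : ℕ)]? := by rw [h]
    rw [List.getElem?_eq_getElem (by simpa using i.2), List.getElem?_eq_getElem i.2] at h9
    simpa [List.get_ofFn] using h9
  · rintro ⟨v, ⟨hlen, hne⟩, hxv⟩ hxw
    apply hne
    refine List.ext_get (by omega) fun i h1 h2 => ?_
    have e1 := hxv ⟨i, h1⟩
    have e2 := hxw ⟨i, h2⟩
    simp only [List.get_eq_getElem] at e1 e2 ⊢
    rw [← e1, ← e2]

end Top

section Comp

theorem list_all_primrec {α β : Type} [Primcodable α] [Primcodable β]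
    {f : α → List β} {p : α → β → Bool} (hf : Primrec f) (hp : Primrec₂ p) :
    Primrec fun a => (f a).all (p a) := by
  have h : Primrec₂ fun a (x : β × Bool) => p a x.1 && x.2 :=
    (Primrec.dom_bool₂ (· && ·)).comp (hp.comp Primrec.fst (Primrec.fst.comp Primrec.snd))
      (Primrec.snd.comp Primrec.snd)
  exact (Primrec.list_foldr hf (Primrec.const true) h).of_eq fun a => by
    induction f a with
    | nil => rfl
    | cons b l ih => simp [ih]

theorem list_any_primrec {α β : Type} [Primcodable α] [Primcodable β]
    {f : α → List β} {p : α → β → Bool} (hf : Primrec f) (hp : Primrec₂ p) :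
    Primrec fun a => (f a).any (p a) := by
  have h : Primrec₂ fun a (x : β × Bool) => p a x.1 || x.2 :=
    (Primrec.dom_bool₂ (· || ·)).comp (hp.comp Primrec.fst (Primrec.fst.comp Primrec.snd))
      (Primrec.snd.comp Primrec.snd)
  exact (Primrec.list_foldr hf (Primrec.const false) h).of_eq fun a => by
    induction f a with
    | nil => rfl
    | cons b l ih => simp [ih]

variable [Primcodable 𝒜]

theorem prefB_primrec [DecidableEq 𝒜] : Primrec₂ (prefB (𝒜 := 𝒜)) := by
  refine list_all_primrec (Primrec.list_range.comp (Primrec.list_length.comp Primrec.fst)) ?_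
  exact Primrec.to₂ (Primrec.eq.comp
    (Primrec.list_getElem?.comp (Primrec.fst.comp Primrec.fst) Primrec.snd)
    (Primrec.list_getElem?.comp (Primrec.snd.comp Primrec.fst) Primrec.snd)).decide

theorem allWordsC_primrec : Primrec (allWordsC 𝒜) := by
  have inner : Primrec₂ fun (q : (ℕ × List (List 𝒜)) × List 𝒜) (a : 𝒜) => a :: q.2 :=
    (Primrec.list_cons.comp Primrec.snd (Primrec.snd.comp Primrec.fst)).to₂
  have hg : Primrec₂ fun (p : ℕ × List (List 𝒜)) (v : List 𝒜) =>
      (univListC 𝒜).map fun a => a :: v :=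
    (Primrec.list_map (Primrec.const (univListC 𝒜)) inner).to₂
  have hstep := (Primrec.list_flatMap Primrec.snd hg).to₂
  exact Primrec.nat_rec₁ [[]] hstep

theorem bigPairsC_primrec : Primrec (bigPairsC 𝒜) := by
  have houter : Primrec fun s : ℕ => (List.range (s + 1)).flatMap (allWordsC 𝒜) :=
    Primrec.list_flatMap (Primrec.list_range.comp Primrec.succ)
      (allWordsC_primrec.comp Primrec.snd).to₂
  have inner : Primrec₂ fun (q : ℕ × List 𝒜) (a : ℕ) => (q.2, a) :=
    (Primrec.pair (Primrec.snd.comp Primrec.fst) Primrec.snd).to₂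
  exact Primrec.list_flatMap houter
    (Primrec.list_map (Primrec.list_range.comp (Primrec.succ.comp Primrec.fst)) inner).to₂

theorem complListC_primrec [DecidableEq 𝒜] : Primrec (complListC (𝒜 := 𝒜)) := by
  refine Primrec.list_flatMap (allWordsC_primrec.comp Primrec.list_length) ?_
  exact (Primrec.ite (Primrec.eq.comp Primrec.snd Primrec.fst) (Primrec.const [])
    (Primrec.list_cons.comp Primrec.snd (Primrec.const []))).to₂

theorem computable_list_map {α β σ : Type} [Primcodable α] [Primcodable β] [Primcodable σ]
    {f : α → List β} {g : β → σ} (hf : Computable f) (hg : Computable g) :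
    Computable fun a => (f a).map g := by
  have hget : Computable fun p : α × ℕ × List σ => (f p.1)[p.2.1]? :=
    Computable.list_getElem?.comp (hf.comp Computable.fst) (Computable.fst.comp Computable.snd)
  have hopt : Computable fun p : α × ℕ × List σ => ((f p.1)[p.2.1]?).map g :=
    Computable.option_map hget (hg.comp Computable.snd).to₂
  have htl : Computable fun p : α × ℕ × List σ => (((f p.1)[p.2.1]?).map g).toList := by
    have := Computable.option_casesOn hopt
      ((Computable.const ([] : List σ)))
      ((Computable.list_cons.comp Computable.snd (Computable.const [])).to₂)
    exact this.of_eq fun p => by rcases ((f p.1)[p.2.1]?).map g with _ | b <;> rfl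
  have hh : Computable₂ fun (a : α) (p : ℕ × List σ) =>
      p.2 ++ (((f a)[p.1]?).map g).toList := by
    have := Computable.list_append.comp
      (Computable.snd.comp (Computable.snd : Computable fun p : α × ℕ × List σ => p.2)) htl
    exact this.to₂
  have hrec := Computable.nat_rec (Computable.list_length.comp hf)
    (Computable.const ([] : List σ)) hh
  refine hrec.of_eq fun a => ?_
  have key : ∀ n : ℕ, (Nat.rec ([] : List σ)
      (fun y IH => IH ++ (((f a)[y]?).map g).toList) n : List σ)
      = ((f a).take n).map g := by
    intro n
    induction n with
    | zero => simp
    | succ n ih =>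
      rw [List.take_succ]
      simp only [ih, List.map_append]
      rcases h : (f a)[n]? with _ | b <;> simp [h]
  simpa using key (f a).length

end Comp

theorem bool_eq_of_iff {a b : Bool} (h : a = true ↔ b = true) : a = b := by
  cases a <;> cases b <;> simp_all

section Cover
variable [Primcodable 𝒜] [DecidableEq 𝒜]

noncomputable def coverCheck (g : List 𝒜 × ℕ → Bool) (L : List (List 𝒜)) (s : ℕ) : Bool :=
  (allWordsC 𝒜 s).all fun v =>
    (L.any fun w => prefB w v) || ((bigPairsC 𝒜 s).any fun p => g p && prefB p.1 v)

noncomputable def coverCheckAux (L : List (List 𝒜)) (s : ℕ) (bs : List Bool) : Bool :=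
  (allWordsC 𝒜 s).all fun v =>
    (L.any fun w => prefB w v) ||
      ((List.range (bigPairsC 𝒜 s).length).any fun j =>
        bs.getD j false && prefB ((bigPairsC 𝒜 s).getD j ([], 0)).1 v)

theorem coverCheckAux_map (g : List 𝒜 × ℕ → Bool) (L : List (List 𝒜)) (s : ℕ) :
    coverCheckAux L s ((bigPairsC 𝒜 s).map g) = coverCheck g L s := by
  unfold coverCheck coverCheckAux
  refine congrArg _ (funext fun v => ?_)
  refine congrArg _ ?_
  refine bool_eq_of_iff ?_
  simp only [List.any_eq_true, List.mem_range, Bool.and_eq_true]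
  constructor
  · rintro ⟨j, hj, hb, hp⟩
    rw [List.getD_eq_getElem _ _ (by simpa using hj)] at hb
    rw [List.getElem_map] at hb
    rw [List.getD_eq_getElem _ _ hj] at hp
    exact ⟨(bigPairsC 𝒜 s)[j], List.getElem_mem _, hb, hp⟩
  · rintro ⟨p, hp, hgp, hpf⟩
    obtain ⟨j, hj, rfl⟩ := List.mem_iff_getElem.mp hp
    refine ⟨j, hj, ?_, ?_⟩
    · rw [List.getD_eq_getElem _ _ (by simpa using hj), List.getElem_map]
      exact hgp
    · rw [List.getD_eq_getElem _ _ hj]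
      exact hpf

theorem coverCheck_computable {g : List 𝒜 × ℕ → Bool} (hg : Computable g) :
    Computable fun q : List (List 𝒜) × ℕ => coverCheck g q.1 q.2 := by
  have h1 : Primrec fun y : (List (List 𝒜) × ℕ × List Bool) × List 𝒜 =>
      y.1.1.any fun w => prefB w y.2 :=
    list_any_primrec (Primrec.fst.comp Primrec.fst)
      ((prefB_primrec.comp Primrec.snd (Primrec.snd.comp Primrec.fst) :
        Primrec fun z : ((List (List 𝒜) × ℕ × List Bool) × List 𝒜) × List 𝒜 =>
          prefB z.2 z.1.2)).to₂
  have hgetd : Primrec fun z : ((List (List 𝒜) × ℕ × List Bool) × List 𝒜) × ℕ =>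
      z.1.1.2.2.getD z.2 false :=
    (Primrec.list_getD false).comp
      (Primrec.snd.comp (Primrec.snd.comp (Primrec.fst.comp Primrec.fst))) Primrec.snd
  have hprefpart : Primrec fun z : ((List (List 𝒜) × ℕ × List Bool) × List 𝒜) × ℕ =>
      prefB ((bigPairsC 𝒜 z.1.1.2.1).getD z.2 ([], 0)).1 z.1.2 :=
    prefB_primrec.comp
      (Primrec.fst.comp ((Primrec.list_getD (([], 0) : List 𝒜 × ℕ)).comp
        (bigPairsC_primrec.comp
          (Primrec.fst.comp (Primrec.snd.comp (Primrec.fst.comp Primrec.fst))))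
        Primrec.snd))
      (Primrec.snd.comp Primrec.fst)
  have hinner : Primrec fun z : ((List (List 𝒜) × ℕ × List Bool) × List 𝒜) × ℕ =>
      z.1.1.2.2.getD z.2 false && prefB ((bigPairsC 𝒜 z.1.1.2.1).getD z.2 ([], 0)).1 z.1.2 :=
    (Primrec.dom_bool₂ (· && ·)).comp hgetd hprefpart
  have h2 : Primrec fun y : (List (List 𝒜) × ℕ × List Bool) × List 𝒜 =>
      (List.range (bigPairsC 𝒜 y.1.2.1).length).any fun j =>
        y.1.2.2.getD j false && prefB ((bigPairsC 𝒜 y.1.2.1).getD j ([], 0)).1 y.2 :=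
    list_any_primrec (Primrec.list_range.comp (Primrec.list_length.comp
      (bigPairsC_primrec.comp (Primrec.fst.comp (Primrec.snd.comp Primrec.fst)))))
      hinner.to₂
  have haux : Primrec fun t : List (List 𝒜) × ℕ × List Bool =>
      coverCheckAux t.1 t.2.1 t.2.2 :=
    list_all_primrec (allWordsC_primrec.comp (Primrec.fst.comp Primrec.snd))
      ((Primrec.dom_bool₂ (· || ·)).comp h1 h2).to₂
  have hmap : Computable fun q : List (List 𝒜) × ℕ => (bigPairsC 𝒜 q.2).map g :=
    computable_list_map (bigPairsC_primrec.to_comp.comp Computable.snd) hg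
  have := haux.to_comp.comp (Computable.pair Computable.fst
    (Computable.pair Computable.snd hmap))
  exact this.of_eq fun q => coverCheckAux_map g q.1 q.2


theorem coverCheck_spec [TopologicalSpace 𝒜] [DiscreteTopology 𝒜]
    {K : Set (ℕ → 𝒜)} {g : List 𝒜 × ℕ → Bool} {W : Set (List 𝒜)}
    (hgW : ∀ w, w ∈ W ↔ ∃ a, g (w, a) = true)
    (hWK : Kᶜ = ⋃ w ∈ W, cyl w) (L : List (List 𝒜)) :
    K ⊆ (⋃ w ∈ L, cyl w) ↔ ∃ s, coverCheck g L s = true := by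
  constructor
  · intro hL
    rcases isEmpty_or_nonempty 𝒜 with hE | hN
    · refine ⟨1, ?_⟩
      rw [coverCheck, List.all_eq_true]
      intro v hv
      rcases v with _ | ⟨a, v⟩
      · exact absurd (mem_allWordsC.1 hv) (by simp)
      · exact (hE.false a).elim
    · inhabit 𝒜
      classical
      set U : List 𝒜 → Set (ℕ → 𝒜) := fun w => if w ∈ L ∨ w ∈ W then cyl w else ∅ with hU
      have hUopen : ∀ w, IsOpen (U w) := by
        intro w; rw [hU]; dsimp only; split_ifs
        exacts [isOpen_cyl w, isOpen_empty]
      have hcover : (Set.univ : Set (ℕ → 𝒜)) ⊆ ⋃ w, U w := by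
        intro x _
        by_cases hx : x ∈ K
        · obtain ⟨w, hwL, hxw⟩ := Set.mem_iUnion₂.1 (hL hx)
          refine Set.mem_iUnion.2 ⟨w, ?_⟩
          rw [hU]; dsimp only; rw [if_pos (Or.inl hwL)]; exact hxw
        · have hx2 : x ∈ ⋃ w ∈ W, cyl w := by rw [← hWK]; exact hx
          obtain ⟨w, hwW, hxw⟩ := Set.mem_iUnion₂.1 hx2
          refine Set.mem_iUnion.2 ⟨w, ?_⟩
          rw [hU]; dsimp only; rw [if_pos (Or.inr hwW)]; exact hxw
      obtain ⟨t, ht⟩ := isCompact_univ.elim_finite_subcover U hUopen hcover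
      set nb : List 𝒜 → ℕ := fun w =>
        w.length + (if h : ∃ a, g (w, a) = true then Nat.find h else 0) with hnb
      refine ⟨t.sup nb, ?_⟩
      rw [coverCheck, List.all_eq_true]
      intro v hv
      have hvlen : v.length = t.sup nb := mem_allWordsC.1 hv
      set x : ℕ → 𝒜 := fun i => v.getD i default with hxdef
      obtain ⟨w, hwt, hxw⟩ := Set.mem_iUnion₂.1 (ht (Set.mem_univ x))
      have hwcond : (w ∈ L ∨ w ∈ W) ∧ x ∈ cyl w := by
        by_cases h : w ∈ L ∨ w ∈ W
        · refine ⟨h, ?_⟩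
          rw [hU] at hxw; dsimp only at hxw; rwa [if_pos h] at hxw
        · rw [hU] at hxw; dsimp only at hxw; rw [if_neg h] at hxw
          exact hxw.elim
      have hws : nb w ≤ t.sup nb := Finset.le_sup hwt
      have hwlen : w.length ≤ t.sup nb := le_trans (Nat.le_add_right _ _) hws
      have hpref : w <+: v := by
        rw [List.prefix_iff_eq_take]
        refine List.ext_get ?_ fun i h1 h2 => ?_
        · rw [List.length_take]; omega
        · have h3 : i < v.length := by omega
          have e1 := hwcond.2 ⟨i, h1⟩
          simp only [List.get_eq_getElem] at e1 ⊢
          rw [List.getElem_take, ← e1, hxdef]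
          simp [List.getElem?_eq_getElem h3]
      rcases hwcond.1 with hwL | hwW
      · rw [Bool.or_eq_true]; left
        rw [List.any_eq_true]
        exact ⟨w, hwL, prefB_iff.2 hpref⟩
      · rw [Bool.or_eq_true]; right
        rw [List.any_eq_true]
        have hex : ∃ a, g (w, a) = true := (hgW w).1 hwW
        refine ⟨(w, Nat.find hex), ?_, ?_⟩
        · refine mem_bigPairsC.2 ⟨hwlen, ?_⟩
          have h5 : nb w = w.length + Nat.find hex := by rw [hnb]; simp [hex]
          omega
        · rw [Bool.and_eq_true]
          exact ⟨Nat.find_spec hex, prefB_iff.2 hpref⟩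
  · rintro ⟨s, hs⟩ x hx
    rw [coverCheck, List.all_eq_true] at hs
    have hv : (List.ofFn fun i : Fin s => x i) ∈ allWordsC 𝒜 s :=
      mem_allWordsC.2 (by simp)
    have hor := hs _ hv
    rw [Bool.or_eq_true] at hor
    rcases hor with h | h
    · rw [List.any_eq_true] at h
      obtain ⟨w, hwL, hpw⟩ := h
      exact Set.mem_iUnion₂.2 ⟨w, hwL, cyl_anti (prefB_iff.1 hpw) (mem_cyl_ofFn x s)⟩
    · rw [List.any_eq_true] at h
      obtain ⟨p, hp, hq⟩ := h
      rw [Bool.and_eq_true] at hq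
      obtain ⟨hgp, hpw⟩ := hq
      have hW : p.1 ∈ W := (hgW p.1).2 ⟨p.2, hgp⟩
      have hxc : x ∈ Kᶜ := by
        rw [hWK]
        exact Set.mem_iUnion₂.2 ⟨p.1, hW, cyl_anti (prefB_iff.1 hpw) (mem_cyl_ofFn x s)⟩
      exact absurd hx hxc

end Cover
end CantorAux

open CantorAux in
/-- For a closed subset of Cantor space over a finite alphabet, upper computability
(the complement is an r.e. union of cylinders) is equivalent to recursive compactness
(inclusion in a finite union of cylinders is semi-decidable). -/
theorem stmt0 {𝒜 : Type} [Fintype 𝒜] [Primcodable 𝒜]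
    [TopologicalSpace 𝒜] [DiscreteTopology 𝒜]
    (K : Set (ℕ → 𝒜)) (hK : IsClosed K) :
    (∃ W : Set (List 𝒜), SigmaOne W ∧ Kᶜ = ⋃ w ∈ W, cyl w) ↔
      SigmaOne {L : List (List 𝒜) | K ⊆ ⋃ w ∈ L, cyl w} := by
  letI : DecidableEq 𝒜 := Encodable.decidableEqOfEncodable 𝒜
  constructor
  · rintro ⟨W, ⟨g, hgc, hgW⟩, hWK⟩
    exact ⟨fun q => coverCheck g q.1 q.2, coverCheck_computable hgc,
      fun L => coverCheck_spec hgW hWK L⟩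
  · rintro ⟨f, hfc, hf⟩
    refine ⟨{w | cyl w ⊆ Kᶜ}, ⟨fun p => f (complListC p.1, p.2),
      hfc.comp (Computable.pair (complListC_primrec.to_comp.comp Computable.fst)
        Computable.snd), fun w => ?_⟩, ?_⟩
    · have h1 : cyl w ⊆ Kᶜ ↔ K ⊆ ⋃ v ∈ complListC w, cyl v := by
        rw [← compl_cyl w]
        exact Set.subset_compl_comm
      rw [Set.mem_setOf_eq, h1]
      exact hf (complListC w)
    · ext x
      simp only [Set.mem_compl_iff, Set.mem_iUnion]
      constructor
      · intro hx
        obtain ⟨n, hn⟩ := exists_cyl_subset hK.isOpen_compl hx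
        exact ⟨_, hn, mem_cyl_ofFn x n⟩
      · rintro ⟨w, hw, hxw⟩
        exact hw hxw
end

section
/- Let X be a nonempty compact metric space, T : X → X continuous, and A ⊆ X a topological attractor of T. Then for every closed set K ⊆ X one has: K ∩ A ≠ ∅ if and only if the set {x ∈ X : ω(x) ∩ K ≠ ∅} is dense in X. -/
open Filter Topology MeasureTheory Set
open scoped ENNReal NNReal

open Metric in
lemma keyEq {X : Type*} [MetricSpace X] [CompactSpace X] {T : X → X}
    {K : Set X} (hK : IsClosed K) (hKne : K.Nonempty) :
    {x : X | (omegaSet T x ∩ K).Nonempty} =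
      ⋂ (m : ℕ) (N : ℕ), ⋃ (n : ℕ) (_ : N ≤ n),
        {x : X | Metric.infDist (T^[n] x) K < 1 / (m + 1)} := by
  ext x
  simp only [mem_setOf_eq, mem_iInter, mem_iUnion, exists_prop]
  constructor
  · rintro ⟨y, hyω, hyK⟩ m N
    have hfreq : ∃ᶠ n in atTop, T^[n] x ∈ Metric.ball y (1 / (m + 1 : ℝ)) :=
      (mapClusterPt_iff_frequently.mp hyω) _ (Metric.ball_mem_nhds y (by positivity))
    obtain ⟨n, hn, hmem⟩ := (frequently_atTop.mp hfreq) N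
    exact ⟨n, hn, lt_of_le_of_lt (Metric.infDist_le_dist_of_mem hyK) hmem⟩
  · intro h
    choose n hn hlt using fun m => h m m
    obtain ⟨y, -, φ, hφ, hconv⟩ :=
      isCompact_univ.tendsto_subseq (x := fun m => T^[n m] x) (fun m => mem_univ _)
    have hφ_ge : ∀ k, k ≤ n (φ k) := fun k => (hφ.id_le k).trans (hn (φ k))
    have hyK : y ∈ K := by
      have h1 : Tendsto (fun k => Metric.infDist (T^[n (φ k)] x) K) atTop
          (𝓝 (Metric.infDist y K)) :=
        ((Metric.continuous_infDist_pt K).continuousAt.tendsto).comp hconv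
      have h2 : Tendsto (fun k : ℕ => 1 / ((φ k : ℝ) + 1)) atTop (𝓝 0) :=
        tendsto_one_div_add_atTop_nhds_zero_nat.comp hφ.tendsto_atTop
      have hle : Metric.infDist y K ≤ 0 :=
        le_of_tendsto_of_tendsto' h1 h2 fun k => (hlt (φ k)).le
      exact (hK.mem_iff_infDist_zero hKne).mpr
        (le_antisymm hle Metric.infDist_nonneg)
    refine ⟨y, ?_, hyK⟩
    have htend : Tendsto (fun k => n (φ k)) atTop atTop :=
      tendsto_atTop_mono hφ_ge tendsto_id
    exact MapClusterPt.of_comp (u := fun m => T^[m] x) htend hconv.mapClusterPt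


/-- If `A` is a topological attractor of a continuous map of a nonempty compact metric space,
then a closed set `K` meets `A` iff `{x : ω(x) ∩ K ≠ ∅}` is dense. -/
theorem stmt1 {X : Type*} [MetricSpace X] [CompactSpace X] [Nonempty X]
    {T : X → X} (hT : Continuous T) {A : Set X} (hA : IsTopAttractor T A)
    {K : Set X} (hK : IsClosed K) :
    (K ∩ A).Nonempty ↔ Dense {x : X | (omegaSet T x ∩ K).Nonempty} := by
  obtain ⟨hAc, -, hres, hmin⟩ := hA
  constructor
  · rintro ⟨z, hzK, hzA⟩
    set A' : ℕ → Set X := fun n => A ∩ {y | 1 / ((n : ℝ) + 1) ≤ Metric.infDist y K}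
      with hA'def
    have hA'closed : ∀ n, IsClosed (A' n) := fun n =>
      hAc.inter (isClosed_le continuous_const (Metric.continuous_infDist_pt K))
    have hA'ssub : ∀ n, A' n ⊂ A := fun n => by
      refine ⟨Set.inter_subset_left, fun hsub => ?_⟩
      have h1 : (1 : ℝ) / ((n : ℝ) + 1) ≤ Metric.infDist z K := (hsub hzA).2
      rw [Metric.infDist_zero_of_mem hzK] at h1
      have : (0 : ℝ) < 1 / ((n : ℝ) + 1) := by positivity
      linarith
    have hmeag : IsMeagre (⋃ n, realm T (A' n)) :=
      isMeagre_iUnion fun n => hmin _ (hA'closed n) (hA'ssub n)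
    have hDres : {x : X | (omegaSet T x ∩ K).Nonempty} ∈ residual X := by
      refine Filter.mem_of_superset (Filter.inter_mem hres hmeag) ?_
      rintro x ⟨hx1, hx2⟩
      by_contra hemp
      simp only [Set.mem_setOf_eq, Set.not_nonempty_iff_eq_empty] at hemp
      apply hx2
      rcases Set.eq_empty_or_nonempty (omegaSet T x) with hω | hω
      · refine Set.mem_iUnion.mpr ⟨0, ?_⟩
        show omegaSet T x ⊆ A' 0
        rw [hω]
        exact Set.empty_subset _
      · have hωclosed : IsClosed (omegaSet T x) := isClosed_setOf_clusterPt
        obtain ⟨y0, hy0, hy0min⟩ := hωclosed.isCompact.exists_isMinOn hω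
          ((Metric.continuous_infDist_pt K).continuousOn)
        have hy0K : y0 ∉ K := fun h => (Set.eq_empty_iff_forall_notMem.mp hemp) y0 ⟨hy0, h⟩
        have hKne : K.Nonempty := ⟨z, hzK⟩
        have hpos : 0 < Metric.infDist y0 K :=
          (hK.notMem_iff_infDist_pos hKne).mp hy0K
        obtain ⟨m, hm⟩ := exists_nat_one_div_lt hpos
        refine Set.mem_iUnion.mpr ⟨m, fun y hy => ⟨hx1 hy, ?_⟩⟩
        exact le_trans hm.le (hy0min hy)
    exact dense_of_mem_residual hDres
  · intro hdense
    have hKne : K.Nonempty := by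
      by_contra h
      rw [Set.not_nonempty_iff_eq_empty] at h
      obtain ⟨x, hx⟩ := hdense.nonempty
      rw [Set.mem_setOf_eq, h, Set.inter_empty] at hx
      exact Set.not_nonempty_empty hx
    have hGδ : IsGδ {x : X | (omegaSet T x ∩ K).Nonempty} := by
      rw [keyEq hK hKne]
      refine IsGδ.iInter fun m => IsGδ.iInter fun N => IsOpen.isGδ ?_
      refine isOpen_iUnion fun n => isOpen_iUnion fun _ => ?_
      exact isOpen_lt ((Metric.continuous_infDist_pt K).comp (hT.iterate n))
        continuous_const
    have hDres : {x : X | (omegaSet T x ∩ K).Nonempty} ∈ residual X :=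
      mem_residual.mpr ⟨_, subset_rfl, hGδ, hdense⟩
    obtain ⟨x, ⟨y, hyω, hyK⟩, hxA⟩ :=
      (dense_of_mem_residual (Filter.inter_mem hDres hres)).nonempty
    exact ⟨y, hyK, hxA hyω⟩
end

section
/- Let X be a compact metric space, T : X → X continuous, λ a Borel probability measure on X, and A ⊆ X a metric attractor of T with respect to λ. Then ω(x) = A for λ-almost every x ∈ X. -/
open Filter Topology MeasureTheory Set
open scoped ENNReal NNReal

private lemma omegaSet_nonempty {X : Type*} [TopologicalSpace X] [CompactSpace X]
    (T : X → X) (x : X) : (omegaSet T x).Nonempty := by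
  obtain ⟨y, hy⟩ := exists_clusterPt_of_compactSpace (Filter.map (fun n => T^[n] x) Filter.atTop)
  exact ⟨y, hy⟩

private lemma isClosed_omegaSet {X : Type*} [TopologicalSpace X] (T : X → X) (x : X) :
    IsClosed (omegaSet T x) :=
  isClosed_setOf_clusterPt (f := Filter.map (fun n => T^[n] x) Filter.atTop)

/-- If `A` is a metric attractor of a continuous map of a compact metric space w.r.t. a Borel
probability measure `lam`, then `ω(x) = A` for `lam`-a.e. `x`. -/
theorem stmt2 {X : Type*} [MetricSpace X] [CompactSpace X]
    [MeasurableSpace X] [BorelSpace X]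
    {T : X → X} (hT : Continuous T) (lam : Measure X) [IsProbabilityMeasure lam]
    {A : Set X} (hA : IsMetricAttractor T lam A) :
    ∀ᵐ x ∂lam, omegaSet T x = A := by
  obtain ⟨hAc, -, hfull, hmin⟩ := hA
  -- `A` is nonempty, since every ω-limit set is nonempty in a compact space
  rcases A.eq_empty_or_nonempty with rfl | hAne
  · exfalso
    have hre : realm T (∅ : Set X) = ∅ := by
      ext x
      simp only [realm, Set.subset_empty_iff, mem_setOf_eq, mem_empty_iff_false, iff_false]
      exact (omegaSet_nonempty T x).ne_empty
    rw [hre, measure_empty] at hfull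
    exact zero_ne_one hfull
  -- the closed "far from A" sets
  set K : ℕ → Set X := fun k => {z | 1 / (k + 1 : ℝ) ≤ Metric.infDist z A} with hKdef
  have hKclosed : ∀ k, IsClosed (K k) := fun k =>
    isClosed_le continuous_const (Metric.continuous_infDist_pt A)
  have hKA : ∀ k, ∀ y ∈ K k, y ∉ A := by
    intro k y hy hyA
    have h0 : Metric.infDist y A = 0 := Metric.infDist_zero_of_mem hyA
    have : (0:ℝ) < 1 / (k + 1 : ℝ) := by positivity
    rw [hKdef] at hy
    simp only [mem_setOf_eq, h0] at hy
    linarith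
  set F : ℕ → Set X := fun k => {x | ∃ᶠ n in Filter.atTop, T^[n] x ∈ K k} with hFdef
  have hFmeas : ∀ k, MeasurableSet (F k) := by
    intro k
    have : F k = ⋂ N : ℕ, ⋃ n : ℕ, ⋃ _ : N ≤ n, (fun x => T^[n] x) ⁻¹' K k := by
      ext x
      simp [hFdef, Filter.frequently_atTop]
    rw [this]
    exact MeasurableSet.iInter fun N => MeasurableSet.iUnion fun n =>
      MeasurableSet.iUnion fun _ =>
        (hT.measurable.iterate n) (hKclosed k).measurableSet
  -- the realm of attraction is the complement of the union of the `F k`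
  have hrealm : realm T A = (⋃ k, F k)ᶜ := by
    ext x
    constructor
    · intro hx
      simp only [mem_compl_iff, mem_iUnion, not_exists]
      intro k hk
      have hne : (Filter.map (fun n => T^[n] x) Filter.atTop ⊓ 𝓟 (K k)).NeBot := by
        rw [← frequently_mem_iff_neBot, Filter.frequently_map]
        exact hk
      obtain ⟨y, hyK, hy⟩ := (hKclosed k).isCompact.exists_clusterPt
        (f := Filter.map (fun n => T^[n] x) Filter.atTop ⊓ 𝓟 (K k)) inf_le_right
      have hyω : y ∈ omegaSet T x := hy.mono inf_le_left
      exact hKA k y hyK (hx hyω)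
    · intro hx y hy
      by_contra hyA
      have hpos : 0 < Metric.infDist y A :=
        (hAc.notMem_iff_infDist_pos hAne).1 hyA
      obtain ⟨k, hk⟩ := exists_nat_one_div_lt (half_pos hpos)
      have hball : Metric.ball y (1 / (k + 1 : ℝ)) ⊆ K k := by
        intro z hz
        rw [Metric.mem_ball] at hz
        have h1 : Metric.infDist y A ≤ Metric.infDist z A + dist y z :=
          Metric.infDist_le_infDist_add_dist
        have h2 : dist y z = dist z y := dist_comm _ _
        simp only [hKdef, mem_setOf_eq]
        linarith
      have hfreq : ∃ᶠ n in Filter.atTop, T^[n] x ∈ K k := by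
        have := mapClusterPt_iff_frequently.1 hy (Metric.ball y (1 / (k + 1 : ℝ)))
          (Metric.ball_mem_nhds y (by positivity))
        exact this.mono fun n hn => hball hn
      exact hx (mem_iUnion.2 ⟨k, hfreq⟩)
  -- the union of the `F k` is null
  have hFnull : lam (⋃ k, F k) = 0 := by
    have hm : MeasurableSet (⋃ k, F k) := MeasurableSet.iUnion hFmeas
    have h1 : lam (⋃ k, F k) + lam ((⋃ k, F k)ᶜ) = 1 := prob_add_prob_compl hm
    rw [← hrealm, hfull] at h1
    have h2 : lam (⋃ k, F k) + 1 = 0 + 1 := by rw [h1, zero_add]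
    exact (ENNReal.add_left_inj ENNReal.one_ne_top).1 h2
  -- the countable union over basis sets meeting A of realms of A \ U is null
  have hBbasis := TopologicalSpace.isBasis_countableBasis X
  set S := {U ∈ TopologicalSpace.countableBasis X | (A ∩ U).Nonempty} with hSdef
  have hScount : S.Countable :=
    (TopologicalSpace.countable_countableBasis X).mono (sep_subset _ _)
  have hNnull : lam (⋃ U ∈ S, realm T (A \ U)) = 0 := by
    refine (measure_biUnion_null_iff hScount).2 ?_
    rintro U ⟨hUB, a, haA, haU⟩
    refine hmin _ (hAc.sdiff (TopologicalSpace.isOpen_of_mem_countableBasis hUB)) ?_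
    exact (ssubset_iff_of_subset diff_subset).2 ⟨a, haA, fun h => h.2 haU⟩
  -- conclusion
  have hsub : {x | ¬ omegaSet T x = A} ⊆ (⋃ k, F k) ∪ (⋃ U ∈ S, realm T (A \ U)) := by
    intro x hx
    by_cases hxr : x ∈ realm T A
    · right
      have hss : omegaSet T x ⊂ A := HasSubset.Subset.ssubset_of_ne hxr hx
      obtain ⟨a, haA, haω⟩ := exists_of_ssubset hss
      obtain ⟨U, hUB, haU, hUsub⟩ := hBbasis.exists_subset_of_mem_open
        (show a ∈ (omegaSet T x)ᶜ from haω) (isClosed_omegaSet T x).isOpen_compl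
      refine mem_biUnion (show U ∈ S from ⟨hUB, a, haA, haU⟩) ?_
      intro y hy
      exact ⟨hxr hy, fun hyU => hUsub hyU hy⟩
    · left
      rw [hrealm, mem_compl_iff, not_not] at hxr
      exact hxr
  exact ae_iff.2 (measure_mono_null hsub (measure_union_null hFnull hNnull))
end

section
/- Let X be a compact metric space, T : X → X continuous, λ a Borel probability measure on X, and A ⊆ X a metric attractor of T with respect to λ. Then for every closed set K ⊆ X one has: K ∩ A ≠ ∅ if and only if λ({x ∈ X : ω(x) ∩ K ≠ ∅}) > 0. -/
open Filter Topology MeasureTheory Set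
open scoped ENNReal NNReal

/-- If `A` is a metric attractor of a continuous map of a compact metric space w.r.t. a Borel
probability measure `lam`, then a closed set `K` meets `A` iff `{x : ω(x) ∩ K ≠ ∅}` has
positive measure. -/
theorem stmt3 {X : Type*} [MetricSpace X] [CompactSpace X]
    [MeasurableSpace X] [BorelSpace X]
    {T : X → X} (hT : Continuous T) (lam : Measure X) [IsProbabilityMeasure lam]
    {A : Set X} (hA : IsMetricAttractor T lam A)
    {K : Set X} (hK : IsClosed K) :
    (K ∩ A).Nonempty ↔ 0 < lam {x : X | (omegaSet T x ∩ K).Nonempty} := by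
  obtain ⟨hAc, hAinv, hAfull, hAmin⟩ := hA
  set S := {x : X | (omegaSet T x ∩ K).Nonempty} with hSdef
  have homega_closed : ∀ x : X, IsClosed (omegaSet T x) := fun x =>
    isClosed_setOf_clusterPt (f := Filter.map (fun n => T^[n] x) Filter.atTop)
  constructor
  · rintro ⟨a, haK, haA⟩
    set A' : ℕ → Set X := fun n => A ∩ {y | 1 / (n + 1 : ℝ) ≤ Metric.infDist y K} with hA'def
    have hclosed : ∀ n, IsClosed (A' n) := fun n =>
      hAc.inter (isClosed_le continuous_const (Metric.continuous_infDist_pt K))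
    have hzero : ∀ n, lam (realm T (A' n)) = 0 := by
      intro n
      refine hAmin _ (hclosed n) ⟨Set.inter_subset_left, fun hsub => ?_⟩
      have := (hsub haA).2
      rw [Set.mem_setOf_eq, Metric.infDist_zero_of_mem haK] at this
      have hp : (0:ℝ) < 1 / (n + 1 : ℝ) := by positivity
      linarith
    have hsub : realm T A ⊆ S ∪ ⋃ n, realm T (A' n) := by
      intro x hx
      by_cases hxS : (omegaSet T x ∩ K).Nonempty
      · exact Or.inl hxS
      · right
        rcases (omegaSet T x).eq_empty_or_nonempty with hω | hω
        · exact Set.mem_iUnion.mpr ⟨0, by intro y hy; rw [hω] at hy; exact hy.elim⟩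
        · have hωc : IsCompact (omegaSet T x) := (homega_closed x).isCompact
          obtain ⟨y₀, hy₀, hmin⟩ := hωc.exists_isMinOn hω
            ((Metric.continuous_infDist_pt K)).continuousOn
          have hy₀K : y₀ ∉ K := fun h => hxS ⟨y₀, hy₀, h⟩
          have hpos : 0 < Metric.infDist y₀ K :=
            (hK.notMem_iff_infDist_pos ⟨a, haK⟩).mp hy₀K
          obtain ⟨n, hn⟩ := exists_nat_one_div_lt hpos
          refine Set.mem_iUnion.mpr ⟨n, fun y hy => ⟨hx hy, ?_⟩⟩
          exact le_trans hn.le (hmin hy)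
    have h1 : (1 : ℝ≥0∞) ≤ lam S := by
      have : lam (realm T A) ≤ lam (S ∪ ⋃ n, realm T (A' n)) := measure_mono hsub
      rw [hAfull] at this
      calc (1 : ℝ≥0∞) ≤ lam (S ∪ ⋃ n, realm T (A' n)) := this
        _ ≤ lam S + lam (⋃ n, realm T (A' n)) := measure_union_le _ _
        _ ≤ lam S + ∑' n, lam (realm T (A' n)) := by gcongr; exact measure_iUnion_le _
        _ = lam S := by simp [hzero]
    exact lt_of_lt_of_le one_pos h1
  · intro hpos
    by_contra hne
    rw [Set.not_nonempty_iff_eq_empty] at hne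
    rcases K.eq_empty_or_nonempty with rfl | hKne
    · have : S = ∅ := by
        ext x; simp [hSdef]
      rw [this] at hpos; simp at hpos
    -- measurability of S
    set F : ℕ → Set X := fun n =>
      {x | ∀ N : ℕ, ∃ m, N ≤ m ∧ Metric.infDist (T^[m] x) K < 1 / (n + 1 : ℝ)} with hFdef
    have hSF : S = ⋂ n, F n := by
      ext x
      constructor
      · rintro ⟨y, hyω, hyK⟩
        refine Set.mem_iInter.mpr fun n => ?_
        intro N
        have hb : Metric.ball y (1 / (n + 1 : ℝ)) ∈ 𝓝 y :=
          Metric.ball_mem_nhds y (by positivity)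
        have := (mapClusterPt_iff_frequently.mp hyω) _ hb
        obtain ⟨m, hmN, hball⟩ := (frequently_atTop.mp this) N
        exact ⟨m, hmN, lt_of_le_of_lt (Metric.infDist_le_dist_of_mem hyK) hball⟩
      · intro hx
        have hx' : ∀ n : ℕ, ∀ N : ℕ, ∃ m, N ≤ m ∧
            Metric.infDist (T^[m] x) K < 1 / (n + 1 : ℝ) :=
          fun n => Set.mem_iInter.mp hx n
        choose m hm1 hm2 using fun n => hx' n n
        set u : ℕ → X := fun n => T^[m n] x with hudef
        obtain ⟨z, -, φ, hφ, hconv⟩ := isCompact_univ.tendsto_subseq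
          (fun n => Set.mem_univ (u n))
        have hzK : z ∈ K := by
          have h1 : Tendsto (fun k => Metric.infDist (u (φ k)) K) atTop
              (𝓝 (Metric.infDist z K)) :=
            ((Metric.continuous_infDist_pt K).tendsto z).comp hconv
          have h2 : Tendsto (fun k => Metric.infDist (u (φ k)) K) atTop (𝓝 0) := by
            apply tendsto_of_tendsto_of_tendsto_of_le_of_le
              (tendsto_const_nhds) tendsto_one_div_add_atTop_nhds_zero_nat
              (fun k => Metric.infDist_nonneg)
              (fun k => ?_)
            calc Metric.infDist (u (φ k)) K ≤ 1 / (φ k + 1 : ℝ) := (hm2 (φ k)).le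
              _ ≤ 1 / (k + 1 : ℝ) :=
                  one_div_le_one_div_of_le (by positivity)
                    (by exact_mod_cast Nat.add_le_add_right hφ.le_apply 1)
          have : Metric.infDist z K = 0 := tendsto_nhds_unique h1 h2
          rw [← hK.closure_eq]
          exact (Metric.mem_closure_iff_infDist_zero hKne).mpr this
        have hzω : z ∈ omegaSet T x := by
          have htm : Tendsto (fun k => m (φ k)) atTop atTop :=
            tendsto_atTop_mono (fun k => le_trans hφ.le_apply (hm1 (φ k))) tendsto_id
          exact MapClusterPt.of_comp htm hconv.mapClusterPt
        exact ⟨z, hzω, hzK⟩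
    have hFmeas : ∀ n, MeasurableSet (F n) := by
      intro n
      have : F n = ⋂ N : ℕ, ⋃ m : ℕ, ⋃ (_ : N ≤ m),
          {x | Metric.infDist (T^[m] x) K < 1 / (n + 1 : ℝ)} := by
        ext x; simp [hFdef]
      rw [this]
      refine MeasurableSet.iInter fun N => MeasurableSet.iUnion fun mm =>
        MeasurableSet.iUnion fun _ => ?_
      exact (isOpen_lt ((Metric.continuous_infDist_pt K).comp (hT.iterate mm))
        continuous_const).measurableSet
    have hSm : MeasurableSet S := hSF ▸ MeasurableSet.iInter hFmeas
    have hsub : realm T A ⊆ Sᶜ := by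
      intro x hx hxS
      obtain ⟨y, hyω, hyK⟩ := hxS
      have : y ∈ K ∩ A := ⟨hyK, hx hyω⟩
      rw [hne] at this
      exact this
    have h1 : (1 : ℝ≥0∞) ≤ lam Sᶜ := hAfull ▸ measure_mono hsub
    have h2 : lam Sᶜ < 1 := by
      rw [measure_compl hSm (measure_ne_top lam S), measure_univ]
      exact ENNReal.sub_lt_self ENNReal.one_ne_top one_ne_zero hpos.ne'
    exact absurd h1 (not_le.mpr h2)
end

section
/- Let X be the Cantor space over a finite alphabet 𝒜, T : X → X a computable map, and A ⊆ X a closed T-invariant set which is strongly attracting. Then A is a Π₁ closed set, i.e. its outer collection {w : [w] ∩ A = ∅} is a Σ₁ (r.e.) set of words. -/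
open Filter Topology MeasureTheory Set
open scoped ENNReal NNReal

namespace Stmt8Aux


/-- `take` as `filterMap` over a range. -/
theorem take_eq_filterMap {τ : Type*} (l : List τ) (k : ℕ) :
    (List.range k).filterMap (fun i => l[i]?) = l.take k := by
  induction k with
  | zero => simp
  | succ k ih =>
    rw [List.range_succ, List.filterMap_append, ih, List.take_succ]
    congr 1

theorem take_ofFn' {τ : Type*} {n : ℕ} (f : Fin n → τ) {t : ℕ} (h : t ≤ n) :
    (List.ofFn f).take t = List.ofFn (fun i : Fin t => f (Fin.castLE h i)) := by
  apply List.ext_getElem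
  · simp [h]
  · intro i h1 h2
    simp only [List.getElem_take, List.getElem_ofFn]
    rfl

section Step

variable {𝒜 : Type*} (α : ℕ → ℕ) (β : ℕ → List 𝒜 → 𝒜)

/-- Auxiliary recursion computing the longest computable run of outputs from prefix `u`. -/
def stepAux (u : List 𝒜) : ℕ → List 𝒜
  | 0 => []
  | k + 1 =>
    let acc := stepAux u k
    cond (decide (acc.length = k) && decide (α k + 1 ≤ u.length))
      (acc ++ [β k (u.take (α k + 1))]) acc

def stepF (u : List 𝒜) : List 𝒜 := stepAux α β u u.length

def iterF (n : ℕ) (u : List 𝒜) : List 𝒜 := (stepF α β)^[n] u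

variable {α β}

theorem stepAux_length_le (u : List 𝒜) (k : ℕ) : (stepAux α β u k).length ≤ k := by
  induction k with
  | zero => simp [stepAux]
  | succ k ih =>
    simp only [stepAux]
    rcases h : (decide ((stepAux α β u k).length = k) && decide (α k + 1 ≤ u.length)) with _ | _
    · simpa using ih.trans (Nat.le_succ k)
    · simp_all

theorem stepAux_length_mono (u : List 𝒜) : Monotone fun k => (stepAux α β u k).length := by
  apply monotone_nat_of_le_succ
  intro k
  simp only [stepAux]
  rcases h : (decide ((stepAux α β u k).length = k) && decide (α k + 1 ≤ u.length)) with _ | _ <;>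
    simp

theorem stepAux_spec (u : List 𝒜) (k : ℕ) :
    ∀ i < (stepAux α β u k).length,
      α i + 1 ≤ u.length ∧ (stepAux α β u k)[i]? = some (β i (u.take (α i + 1))) := by
  induction k with
  | zero => intro i hi; simp [stepAux] at hi
  | succ k ih =>
    intro i hi
    simp only [stepAux] at hi ⊢
    rcases h : (decide ((stepAux α β u k).length = k) && decide (α k + 1 ≤ u.length)) with _ | _
    · rw [h] at hi; simp only [Bool.cond_false] at hi ⊢; exact ih i hi
    · rw [h] at hi
      simp only [Bool.and_eq_true, decide_eq_true_eq] at h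
      obtain ⟨hlen, hα⟩ := h
      simp only [Bool.cond_true] at hi ⊢
      rcases Nat.lt_or_ge i (stepAux α β u k).length with hik | hik
      · rw [List.getElem?_append_left hik]
        exact ih i hik
      · have hi' : i < (stepAux α β u k).length + 1 := by
          simpa [List.length_append] using hi
        have hik' : i = k := by omega
        subst hik'
        refine ⟨hα, ?_⟩
        rw [List.getElem?_append_right hik]
        simp [hlen]

theorem stepAux_length_eq (u : List 𝒜) (k : ℕ) (h : ∀ i < k, α i + 1 ≤ u.length) :
    (stepAux α β u k).length = k := by
  induction k with
  | zero => simp [stepAux]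
  | succ k ih =>
    have hk : (stepAux α β u k).length = k := ih fun i hi => h i (hi.trans (Nat.lt_succ_self k))
    simp only [stepAux]
    rw [hk]
    have : (decide (k = k) && decide (α k + 1 ≤ u.length)) = true := by
      simp [h k (Nat.lt_succ_self k)]
    rw [this]
    simp [hk]

/-- Length guarantee for one step. -/
theorem stepF_length_ge (u : List 𝒜) (k : ℕ) (hk : k ≤ u.length)
    (h : ∀ i < k, α i + 1 ≤ u.length) : k ≤ (stepF α β u).length := by
  have h1 : (stepAux α β u k).length = k := stepAux_length_eq u k h
  have h2 := stepAux_length_mono (α := α) (β := β) u hk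
  simpa [stepF, h1] using h2

/-- Semantic correctness of one step, given the computability equations for `T`. -/
theorem stepF_prefix {T : (ℕ → 𝒜) → (ℕ → 𝒜)}
    (hTβ : ∀ (x : ℕ → 𝒜) (n : ℕ), T x n = β n (List.ofFn fun i : Fin (α n + 1) => x i))
    (x : ℕ → 𝒜) (m : ℕ) :
    ∃ k, stepF α β (List.ofFn fun i : Fin m => x i) = List.ofFn fun i : Fin k => T x i := by
  set u : List 𝒜 := List.ofFn fun i : Fin m => x i with hu
  refine ⟨(stepF α β u).length, ?_⟩
  apply List.ext_getElem (by simp)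
  intro i h1 h2
  obtain ⟨hα, hval⟩ := stepAux_spec u u.length i h1
  have hαm : α i + 1 ≤ m := by simpa [hu] using hα
  have htake : u.take (α i + 1) = List.ofFn fun j : Fin (α i + 1) => x j := by
    rw [hu, take_ofFn' _ hαm]
    rfl
  have hval' : (stepF α β u)[i]? = some (β i (u.take (α i + 1))) := hval
  rw [List.getElem?_eq_getElem h1] at hval'
  have : (stepF α β u)[i] = β i (u.take (α i + 1)) := Option.some_injective _ hval'
  rw [this, List.getElem_ofFn, htake, ← hTβ]

theorem iterF_prefix {T : (ℕ → 𝒜) → (ℕ → 𝒜)}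
    (hTβ : ∀ (x : ℕ → 𝒜) (n : ℕ), T x n = β n (List.ofFn fun i : Fin (α n + 1) => x i))
    (n : ℕ) :
    ∀ (x : ℕ → 𝒜) (m : ℕ),
      ∃ k, iterF α β n (List.ofFn fun i : Fin m => x i) = List.ofFn fun i : Fin k => T^[n] x i := by
  induction n with
  | zero => intro x m; exact ⟨m, rfl⟩
  | succ n ih =>
    intro x m
    obtain ⟨k₁, hk₁⟩ := stepF_prefix hTβ x m
    obtain ⟨k, hk⟩ := ih (T x) k₁
    refine ⟨k, ?_⟩
    rw [iterF, Function.iterate_succ_apply, hk₁]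
    rw [iterF] at hk
    rw [hk]
    simp [Function.iterate_succ_apply]

/-- The (noncomputable, math-level) bound on input length needed for one step. -/
noncomputable def gB (k : ℕ) : ℕ := max k ((Finset.range k).sup fun i => α i + 1)

theorem iterF_length_ge (n : ℕ) :
    ∀ (k : ℕ) (u : List 𝒜), (gB (α := α))^[n] k ≤ u.length → k ≤ (iterF α β n u).length := by
  induction n with
  | zero => intro k u h; simpa [iterF] using h
  | succ n ih =>
    intro k u h
    rw [Function.iterate_succ_apply', gB, max_le_iff] at h
    obtain ⟨h1, hsup⟩ := h
    have h2 : ∀ i < (gB (α := α))^[n] k, α i + 1 ≤ u.length := by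
      intro i hi
      exact le_trans (Finset.le_sup (f := fun i => α i + 1) (Finset.mem_range.2 hi)) hsup
    have := stepF_length_ge (β := β) u _ h1 h2
    rw [iterF, Function.iterate_succ_apply]
    exact ih k _ this

end Step



section Words

variable (𝒜 : Type) [Fintype 𝒜]

/-- All words of length `m` over the alphabet. -/
noncomputable def allW : ℕ → List (List 𝒜) :=
  Nat.rec [[]] fun _ acc => acc.flatMap fun u => (Finset.univ.toList (α := 𝒜)).map (· :: u)

theorem allW_zero : allW 𝒜 0 = [[]] := rfl

theorem allW_succ (m : ℕ) :
    allW 𝒜 (m + 1) = (allW 𝒜 m).flatMap fun u => (Finset.univ.toList (α := 𝒜)).map (· :: u) :=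
  rfl

theorem mem_allW (m : ℕ) (u : List 𝒜) : u ∈ allW 𝒜 m ↔ u.length = m := by
  induction m generalizing u with
  | zero => simp [allW_zero, List.length_eq_zero_iff]
  | succ m ih =>
    rw [allW_succ]
    simp only [List.mem_flatMap, List.mem_map]
    constructor
    · rintro ⟨v, hv, a, -, rfl⟩
      simp [(ih v).1 hv]
    · intro hu
      match u, hu with
      | a :: v, hu =>
        exact ⟨v, (ih v).2 (by simpa using hu), a, by simp [Finset.mem_toList], rfl⟩

end Words

section AllB

variable {τ : Type*}

def allBAux (p : τ → Bool) (l : List τ) : ℕ → Bool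
  | 0 => true
  | k + 1 => allBAux p l k && (l[k]?.elim true p)

def allB (p : τ → Bool) (l : List τ) : Bool := allBAux p l l.length

theorem allBAux_iff (p : τ → Bool) (l : List τ) (k : ℕ) :
    allBAux p l k = true ↔ ∀ i < k, ∀ u, l[i]? = some u → p u = true := by
  induction k with
  | zero => simp [allBAux]
  | succ k ih =>
    simp only [allBAux, Bool.and_eq_true, ih]
    constructor
    · rintro ⟨h1, h2⟩ i hi u hu
      rcases Nat.lt_or_ge i k with h | h
      · exact h1 i h u hu
      · have : i = k := by omega
        subst this
        rw [hu] at h2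
        simpa using h2
    · intro h
      refine ⟨fun i hi u hu => h i (hi.trans (Nat.lt_succ_self k)) u hu, ?_⟩
      cases hu : l[k]? with
      | none => simp
      | some u => simpa using h k (Nat.lt_succ_self k) u hu

theorem allB_iff (p : τ → Bool) (l : List τ) :
    allB p l = true ↔ ∀ u ∈ l, p u = true := by
  rw [allB, allBAux_iff]
  constructor
  · intro h u hu
    obtain ⟨i, hi, hgu⟩ := List.getElem_of_mem hu
    exact h i hi u (by rw [List.getElem?_eq_getElem hi, hgu])
  · intro h i hi u hu
    exact h u (List.mem_of_getElem? hu)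

end AllB



theorem take_eq_filterMap' {τ : Type*} (l : List τ) (k : ℕ) :
    (List.range k).filterMap (fun i => l[i]?) = l.take k := by
  induction k with
  | zero => simp
  | succ k ih =>
    rw [List.range_succ, List.filterMap_append, ih, List.take_succ]
    congr 1

theorem primrec_take {τ : Type} [Primcodable τ] :
    Primrec₂ (fun (l : List τ) (k : ℕ) => l.take k) :=
  (Primrec.listFilterMap (α := List τ × ℕ) (f := fun p => List.range p.2)
    (g := fun p i => p.1[i]?) (Primrec.list_range.comp Primrec.snd)
    (Primrec.list_getElem?.comp₂ ((Primrec.fst.comp Primrec.fst).to₂)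
      (Primrec.snd.to₂))).to₂.of_eq fun l k => take_eq_filterMap' l k

variable {𝒜 : Type} [Primcodable 𝒜] {α : ℕ → ℕ} {β : ℕ → List 𝒜 → 𝒜}

section StepComp

open Computable in
theorem computable_stepAux (hα : Computable α) (hβ : Computable₂ β) :
    Computable fun p : List 𝒜 × ℕ => stepAux α β p.1 p.2 := by
  have hc : Computable fun a : (List 𝒜 × ℕ) × ℕ × List 𝒜 =>
      (decide (a.2.2.length = a.2.1) && decide (α a.2.1 + 1 ≤ a.1.1.length)) :=
    (Primrec₂.to_comp Primrec.and).comp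
      ((Primrec₂.to_comp Primrec.eq.decide).comp
        (Primrec.list_length.to_comp.comp (snd.comp snd)) (fst.comp snd))
      ((Primrec₂.to_comp Primrec.nat_le.decide).comp
        (succ.comp (hα.comp (fst.comp snd)))
        (Primrec.list_length.to_comp.comp (fst.comp fst)))
  have hf : Computable fun a : (List 𝒜 × ℕ) × ℕ × List 𝒜 =>
      a.2.2 ++ [β a.2.1 (a.1.1.take (α a.2.1 + 1))] :=
    Computable.list_append.comp (snd.comp snd)
      (Computable.list_cons.comp
        (hβ.comp (fst.comp snd)
          ((primrec_take.to_comp).comp (fst.comp fst)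
            (succ.comp (hα.comp (fst.comp snd)))))
        (const []))
  have H := Computable.nat_rec (f := fun p : List 𝒜 × ℕ => p.2)
    (g := fun _ : List 𝒜 × ℕ => ([] : List 𝒜))
    (h := fun (p : List 𝒜 × ℕ) (q : ℕ × List 𝒜) =>
      cond (decide (q.2.length = q.1) && decide (α q.1 + 1 ≤ p.1.length))
        (q.2 ++ [β q.1 (p.1.take (α q.1 + 1))]) q.2)
    snd (const []) (Computable.cond hc hf (snd.comp snd)).to₂
  refine H.of_eq fun p => ?_
  rcases p with ⟨u, k⟩
  induction k with
  | zero => rfl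
  | succ k ih => simp only [stepAux, ih]

theorem computable_stepF (hα : Computable α) (hβ : Computable₂ β) :
    Computable (stepF α β) :=
  ((computable_stepAux hα hβ).comp
    (Computable.id.pair (Primrec.list_length.to_comp))).of_eq fun u => rfl

theorem computable_iterF (hα : Computable α) (hβ : Computable₂ β) :
    Computable fun p : ℕ × List 𝒜 => iterF α β p.1 p.2 := by
  have H := Computable.nat_rec (f := fun p : ℕ × List 𝒜 => p.1)
    (g := fun p : ℕ × List 𝒜 => p.2)
    (h := fun (_ : ℕ × List 𝒜) (q : ℕ × List 𝒜) => stepF α β q.2)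
    Computable.fst Computable.snd
    (((computable_stepF hα hβ).comp (Computable.snd.comp Computable.snd)).to₂)
  refine H.of_eq fun p => ?_
  rcases p with ⟨n, u⟩
  induction n with
  | zero => rfl
  | succ n ih =>
    simp only [iterF] at ih ⊢
    rw [Function.iterate_succ_apply']
    simpa using congrArg (stepF α β) ih

end StepComp

theorem primrec_allW [Fintype 𝒜] : Primrec (allW 𝒜) := by
  have h1 : Primrec fun l : List (List 𝒜) =>
      l.flatMap fun u => (Finset.univ.toList (α := 𝒜)).map (· :: u) :=
    Primrec.list_flatMap Primrec.id
      ((Primrec.list_map (Primrec.const (Finset.univ.toList (α := 𝒜)))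
        ((Primrec.list_cons.comp Primrec.snd (Primrec.snd.comp Primrec.fst)).to₂)).to₂)
  exact (Primrec.nat_rec₁ ([[]] : List (List 𝒜)) ((h1.comp Primrec.snd).to₂)).of_eq fun n => rfl

open Computable in
theorem computable_allB {σ τ : Type} [Primcodable σ] [Primcodable τ]
    {P : σ → τ → Bool} {l : σ → List τ} (hP : Computable₂ P) (hl : Computable l) :
    Computable fun a => allB (P a) (l a) := by
  have he : Computable fun r : σ × ℕ × Bool => ((l r.1)[r.2.1]?).elim true (P r.1) := by
    have := Computable.option_casesOn (o := fun r : σ × ℕ × Bool => (l r.1)[r.2.1]?)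
      (f := fun _ => true) (g := fun (r : σ × ℕ × Bool) (u : τ) => P r.1 u)
      (Primrec.list_getElem?.to_comp.comp (hl.comp fst) (fst.comp snd))
      (const true) ((hP.comp (fst.comp fst) snd).to₂)
    exact this.of_eq fun r => by cases h : (l r.1)[r.2.1]? <;> simp [h]
  have H := Computable.nat_rec (f := fun a => (l a).length)
    (g := fun _ : σ => true)
    (h := fun (a : σ) (q : ℕ × Bool) => q.2 && ((l a)[q.1]?).elim true (P a))
    (Primrec.list_length.to_comp.comp hl) (const true)
    ((Primrec.and.to_comp.comp (snd.comp snd) he).to₂)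
  refine H.of_eq fun a => ?_
  beta_reduce
  rw [allB]
  generalize (l a).length = K
  induction K with
  | zero => simp [allBAux]
  | succ k ih => simp only [allBAux, ← ih]


end Stmt8Aux


open Stmt8Aux in
/-- A strongly attracting closed invariant set of a computable map of Cantor space is Π₁:
its outer collection of cylinders is Σ₁ (r.e.). -/
theorem stmt8 {𝒜 : Type} [Fintype 𝒜] [Primcodable 𝒜]
    [TopologicalSpace 𝒜] [DiscreteTopology 𝒜]
    {T : (ℕ → 𝒜) → (ℕ → 𝒜)} (hT : CantorComputable T)
    {A : Set (ℕ → 𝒜)} (hclosed : IsClosed A) (hinv : Set.MapsTo T A A)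
    (hstrong : StronglyAttracting T A) :
    SigmaOne {w : List 𝒜 | cyl w ∩ A = ∅} := by
  classical
  obtain ⟨α, β, hα, hβ, hTβ⟩ := hT
  obtain ⟨U, hUopen, hAU, hTU, hAeq⟩ := hstrong
  rcases isEmpty_or_nonempty 𝒜 with hempty | hne
  · refine ⟨fun _ => true, Computable.const true, fun w => ?_⟩
    have hXempty : IsEmpty (ℕ → 𝒜) := ⟨fun x => (hempty.false (x 0)).elim⟩
    have h1 : cyl w ∩ A = ∅ := Set.eq_empty_of_isEmpty _
    simp [h1]
  obtain ⟨a₀⟩ := hne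
  letI : DecidableEq 𝒜 := Encodable.decidableEqOfEncodable 𝒜
  -- continuity of T
  have hTcont : Continuous T := by
    apply continuous_pi
    intro n
    have heq : (fun x : ℕ → 𝒜 => T x n)
        = (fun g : Fin (α n + 1) → 𝒜 => β n (List.ofFn g)) ∘
          fun (x : ℕ → 𝒜) (i : Fin (α n + 1)) => x i := by
      funext x; exact hTβ x n
    rw [heq]
    exact continuous_of_discreteTopology.comp (continuous_pi fun i => continuous_apply (i : ℕ))
  -- construct a clopen forward-invariant C with A = ⋂ Tⁿ(C)
  set K : Set (ℕ → 𝒜) := T '' closure U with hK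
  have hKcomp : IsCompact K := (isClosed_closure.isCompact).image hTcont
  have hKU : K ⊆ U := hTU
  choose V hV1 hV2 hV3 using fun x : K => compact_exists_isClopen_in_isOpen hUopen (hKU x.2)
  obtain ⟨t, ht⟩ := hKcomp.elim_finite_subcover V (fun x => (hV1 x).2)
    (fun x hx => Set.mem_iUnion.2 ⟨⟨x, hx⟩, hV2 _⟩)
  set C : Set (ℕ → 𝒜) := ⋃ x ∈ t, V x with hC
  have hCclopen : IsClopen C := isClopen_biUnion_finset fun x _ => hV1 x
  have hCU : C ⊆ U := Set.iUnion₂_subset fun x _ => hV3 x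
  have hKC : K ⊆ C := ht
  have hTC : T '' C ⊆ C := fun y hy =>
    hKC (Set.image_mono (f := T) (hCU.trans subset_closure) hy)
  have hTnC_anti : Antitone fun n => T^[n] '' C := by
    apply antitone_nat_of_succ_le
    intro n
    have h2 : T^[n + 1] '' C = T^[n] '' (T '' C) := by
      rw [Function.iterate_succ, Set.image_comp]
    rw [h2]
    exact Set.image_mono hTC
  have hATn : ∀ n, A ⊆ T^[n] '' C := by
    intro n
    have h1 : A ⊆ T^[n + 1] '' U := by rw [hAeq]; exact Set.iInter_subset _ (n + 1)
    have h2 : T^[n + 1] '' U = T^[n] '' (T '' U) := by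
      rw [Function.iterate_succ, Set.image_comp]
    have h3 : T '' U ⊆ C := (Set.image_mono (f := T) subset_closure).trans hKC
    intro y hy
    exact Set.image_mono h3 (h2 ▸ h1 hy)
  have hCap : (⋂ n, T^[n] '' C) = A := by
    apply Set.Subset.antisymm
    · rw [hAeq]; exact Set.iInter_mono fun n => Set.image_mono hCU
    · exact Set.subset_iInter hATn
  -- determinacy length L of the clopen set C
  have hcylnbhd : ∀ (S : Set (ℕ → 𝒜)), IsOpen S → ∀ x ∈ S, ∃ n, PiNat.cylinder x n ⊆ S := by
    intro S hS x hx
    obtain ⟨v, ⟨z, n, rfl⟩, hxv, hvS⟩ :=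
      (PiNat.isTopologicalBasis_cylinders (fun _ : ℕ => 𝒜)).exists_subset_of_mem_open hx hS
    exact ⟨n, by rw [PiNat.mem_cylinder_iff_eq.1 hxv]; exact hvS⟩
  have hdet : ∀ x : ℕ → 𝒜, ∃ n, ∀ y : ℕ → 𝒜, (∀ i < n, y i = x i) → (y ∈ C ↔ x ∈ C) := by
    intro x
    by_cases hx : x ∈ C
    · obtain ⟨n, hn⟩ := hcylnbhd C hCclopen.2 x hx
      exact ⟨n, fun y hy => iff_of_true (hn hy) hx⟩
    · obtain ⟨n, hn⟩ := hcylnbhd Cᶜ hCclopen.1.isOpen_compl x hx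
      exact ⟨n, fun y hy => iff_of_false (hn hy) hx⟩
  choose nfun hnfun using hdet
  obtain ⟨s, hs⟩ := (isCompact_univ (X := ℕ → 𝒜)).elim_finite_subcover
    (fun x => PiNat.cylinder x (nfun x)) (fun x => PiNat.isOpen_cylinder _ x (nfun x))
    (fun x _ => Set.mem_iUnion.2 ⟨x, PiNat.self_mem_cylinder _ _⟩)
  set L : ℕ := s.sup nfun with hLdef
  have hL : ∀ x y : ℕ → 𝒜, (∀ i < L, y i = x i) → (y ∈ C ↔ x ∈ C) := by
    intro x y hxy
    obtain ⟨z, hzs, hxz⟩ := Set.mem_iUnion₂.1 (hs (Set.mem_univ x))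
    have hnz : nfun z ≤ L := Finset.le_sup hzs
    have hxC := hnfun z x hxz
    have hyC := hnfun z y (fun i hi => by
      rw [hxy i (lt_of_lt_of_le hi hnz)]; exact hxz i hi)
    exact hyC.trans hxC.symm
  -- finite description of C
  set ext : List 𝒜 → (ℕ → 𝒜) := fun u i => u.getD i a₀ with hext
  set Sl : List (List 𝒜) := (allW 𝒜 L).filter (fun u => decide (ext u ∈ C)) with hSldef
  have hSl_mem : ∀ x : ℕ → 𝒜, x ∈ C ↔ (List.ofFn fun i : Fin L => x i) ∈ Sl := by
    intro x
    have hlen : (List.ofFn fun i : Fin L => x i).length = L := by simp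
    have hagree : ∀ i < L, ext (List.ofFn fun i : Fin L => x i) i = x i := by
      intro i hi
      rw [hext]
      simp only
      rw [List.getD_eq_getElem _ _ (by simpa using hi), List.getElem_ofFn]
    have hEquiv : ext (List.ofFn fun i : Fin L => x i) ∈ C ↔ x ∈ C := hL x _ hagree
    rw [hSldef, List.mem_filter]
    constructor
    · intro hx
      exact ⟨(mem_allW 𝒜 L _).2 hlen, decide_eq_true (hEquiv.2 hx)⟩
    · rintro ⟨-, hd⟩
      exact hEquiv.1 (of_decide_eq_true hd)
  -- closedness/compactness facts
  have hcylclosed : ∀ w : List 𝒜, IsClosed (cyl w) := by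
    intro w
    have hcyleq : cyl w = ⋂ i : Fin w.length, {x : ℕ → 𝒜 | x i = w.get i} := by
      ext x; simp [cyl, Set.mem_iInter]
    rw [hcyleq]
    exact isClosed_iInter fun i => isClosed_eq (continuous_apply _) continuous_const
  have hCcomp : IsCompact C := hCclopen.1.isCompact
  have hFIP : ∀ w : List 𝒜, cyl w ∩ A = ∅ → ∃ N, cyl w ∩ (T^[N] '' C) = ∅ := by
    intro w hw
    by_contra hcon
    push_neg at hcon
    have hne : ∀ n, (cyl w ∩ T^[n] '' C).Nonempty := hcon
    have hdir : Directed (· ⊇ ·) fun n => cyl w ∩ T^[n] '' C := fun m n =>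
      ⟨max m n, Set.inter_subset_inter_right _ (hTnC_anti (le_max_left m n)),
        Set.inter_subset_inter_right _ (hTnC_anti (le_max_right m n))⟩
    have hcl : ∀ n, IsClosed (cyl w ∩ T^[n] '' C) := fun n =>
      (hcylclosed w).inter ((hCcomp.image (hTcont.iterate n)).isClosed)
    have hnonempty := IsCompact.nonempty_iInter_of_directed_nonempty_isCompact_isClosed
      _ hdir hne (fun n => (hcl n).isCompact) hcl
    rw [← Set.inter_iInter, hCap] at hnonempty
    exact Set.not_nonempty_iff_eq_empty.2 hw hnonempty
  -- the Σ₁ witness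
  refine ⟨fun p =>
    decide (L ≤ (Nat.unpair p.2).2) &&
      allB (fun u : List 𝒜 =>
        (allB (fun sw => !(decide (sw = u.take L))) Sl) ||
        (decide (p.1.length ≤ (iterF α β (Nat.unpair p.2).1 u).length) &&
         !(decide ((iterF α β (Nat.unpair p.2).1 u).take p.1.length = p.1))))
      (allW 𝒜 (Nat.unpair p.2).2), ?_, ?_⟩
  · -- computability
    have h0 : Computable fun r : (List 𝒜 × ℕ) × List 𝒜 => ((Nat.unpair r.1.2).1, r.2) :=
      (Computable.fst.comp (Computable.unpair.comp (Computable.snd.comp Computable.fst))).pair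
        Computable.snd
    have hiter' := (computable_iterF hα hβ).comp h0
    have hiter : Computable fun r : (List 𝒜 × ℕ) × List 𝒜 =>
        iterF α β (Nat.unpair r.1.2).1 r.2 := hiter'.of_eq fun r => rfl
    have b0 : Computable fun r : (List 𝒜 × ℕ) × List 𝒜 =>
        (allB (fun sw => !(decide (sw = r.2.take L))) Sl) :=
      computable_allB (l := fun _ => Sl)
        ((Primrec.not.to_comp.comp (Primrec.eq.decide.to_comp.comp Computable.snd
          ((primrec_take.to_comp).comp (Computable.snd.comp Computable.fst)
            (Computable.const L)))).to₂)
        (Computable.const Sl)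
    have b1 : Computable fun r : (List 𝒜 × ℕ) × List 𝒜 =>
        decide (r.1.1.length ≤ (iterF α β (Nat.unpair r.1.2).1 r.2).length) :=
      Primrec.nat_le.decide.to_comp.comp
        (Primrec.list_length.to_comp.comp (Computable.fst.comp Computable.fst))
        (Primrec.list_length.to_comp.comp hiter)
    have b2 : Computable fun r : (List 𝒜 × ℕ) × List 𝒜 =>
        !(decide ((iterF α β (Nat.unpair r.1.2).1 r.2).take r.1.1.length = r.1.1)) :=
      Primrec.not.to_comp.comp (Primrec.eq.decide.to_comp.comp
        (primrec_take.to_comp.comp hiter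
          (Primrec.list_length.to_comp.comp (Computable.fst.comp Computable.fst)))
        (Computable.fst.comp Computable.fst))
    have hP : Computable₂ fun (p : List 𝒜 × ℕ) (u : List 𝒜) =>
        (allB (fun sw => !(decide (sw = u.take L))) Sl) ||
        (decide (p.1.length ≤ (iterF α β (Nat.unpair p.2).1 u).length) &&
         !(decide ((iterF α β (Nat.unpair p.2).1 u).take p.1.length = p.1))) :=
      (Primrec.or.to_comp.comp b0 (Primrec.and.to_comp.comp b1 b2)).to₂
    have c1 : Computable fun p : List 𝒜 × ℕ => decide (L ≤ (Nat.unpair p.2).2) :=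
      Primrec.nat_le.decide.to_comp.comp (Computable.const L)
        (Computable.snd.comp (Computable.unpair.comp Computable.snd))
    have c2 := computable_allB hP
      ((primrec_allW.to_comp).comp (Computable.snd.comp (Computable.unpair.comp Computable.snd)))
    exact Primrec.and.to_comp.comp c1 c2
  · -- correctness
    intro w
    simp only [Set.mem_setOf_eq]
    constructor
    · -- cyl w ∩ A = ∅ → ∃ witness
      intro hw
      obtain ⟨N, hN⟩ := hFIP w hw
      set m : ℕ := max L ((gB (α := α))^[N] w.length) with hm
      refine ⟨Nat.pair N m, ?_⟩
      rw [Nat.unpair_pair]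
      simp only
      rw [Bool.and_eq_true]
      constructor
      · exact decide_eq_true (le_max_left _ _)
      · rw [allB_iff]
        intro u hu
        have hulen : u.length = m := (mem_allW 𝒜 m u).1 hu
        by_cases huSl : u.take L ∈ Sl
        case neg =>
          have hmB : allB (fun sw => !(decide (sw = u.take L))) Sl = true := by
            rw [allB_iff]
            intro sw hsw
            simp only [Bool.not_eq_true', decide_eq_false_iff_not]
            exact fun h => huSl (h ▸ hsw)
          simp [hmB]
        set x : ℕ → 𝒜 := fun i => u.getD i a₀ with hx
        have hofFn : (List.ofFn fun i : Fin m => x i) = u := by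
          apply List.ext_getElem (by simp [hulen])
          intro i h1 h2
          rw [List.getElem_ofFn]
          exact (List.getD_eq_getElem u a₀ h2).symm ▸ rfl
        have hLm : L ≤ m := le_max_left _ _
        have htakeL : u.take L = List.ofFn fun i : Fin L => x i := by
          rw [← hofFn, take_ofFn' _ hLm]
          rfl
        have hxC : x ∈ C := (hSl_mem x).2 (htakeL ▸ huSl)
        obtain ⟨k, hk⟩ := iterF_prefix hTβ N x m
        rw [hofFn] at hk
        have hklen : (iterF α β N u).length = k := by rw [hk]; simp
        have hkge : w.length ≤ k := by
          have := iterF_length_ge (β := β) N w.length u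
            (by rw [hulen]; exact le_max_right _ _)
          rw [hklen] at this
          exact this
        have hTN : T^[N] x ∉ cyl w := by
          intro hmem'
          have : T^[N] x ∈ cyl w ∩ T^[N] '' C := ⟨hmem', Set.mem_image_of_mem _ hxC⟩
          rw [hN] at this
          exact this
        have hform : (iterF α β N u).take w.length
            = List.ofFn (fun i : Fin w.length => T^[N] x i) := by
          rw [hk, take_ofFn' _ hkge]
          rfl
        have hne : (iterF α β N u).take w.length ≠ w := by
          intro heq
          apply hTN
          have hofn : List.ofFn (fun i : Fin w.length => T^[N] x i) = w := by
            rw [← hform, heq]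
          intro i
          have h2 : (List.ofFn fun j : Fin w.length => T^[N] x j)[(i : ℕ)]'(by simp)
              = w[(i : ℕ)]'(i.isLt) := List.getElem_of_eq hofn (by simp)
          simpa [List.getElem_ofFn, List.get_eq_getElem] using h2
        have hmB : allB (fun sw => !(decide (sw = u.take L))) Sl = false := by
          rw [Bool.eq_false_iff, Ne, allB_iff]
          intro hall2
          have := hall2 _ huSl
          simp at this
        simp [hmB, hkge, hklen, hne]
    · -- ∃ witness → cyl w ∩ A = ∅
      rintro ⟨a, ha⟩
      rw [Bool.and_eq_true] at ha
      obtain ⟨hLa, hall⟩ := ha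
      have hLm : L ≤ (Nat.unpair a).2 := of_decide_eq_true hLa
      set n : ℕ := (Nat.unpair a).1
      set m : ℕ := (Nat.unpair a).2
      rw [Set.eq_empty_iff_forall_notMem]
      rintro y ⟨hyw, hyA⟩
      obtain ⟨x, hxC, rfl⟩ := hATn n hyA
      set u : List 𝒜 := List.ofFn fun i : Fin m => x i with hu
      have humem : u ∈ allW 𝒜 m := (mem_allW 𝒜 m u).2 (by simp [hu])
      have hcheck := (allB_iff _ _).1 hall u humem
      have htakeL : u.take L = List.ofFn fun i : Fin L => x i := by
        rw [hu, take_ofFn' _ hLm]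
        rfl
      have huSl : u.take L ∈ Sl := htakeL ▸ (hSl_mem x).1 hxC
      have hmB : allB (fun sw => !(decide (sw = u.take L))) Sl = false := by
        rw [Bool.eq_false_iff, Ne, allB_iff]
        intro hall2
        have := hall2 _ huSl
        simp at this
      obtain ⟨k, hk⟩ := iterF_prefix hTβ n x m
      rw [← hu] at hk
      have hklen : (iterF α β n u).length = k := by rw [hk]; simp
      rw [hmB, Bool.false_or, Bool.and_eq_true] at hcheck
      obtain ⟨hwlen, hne⟩ := hcheck
      have hwk : w.length ≤ k := by rw [← hklen]; exact of_decide_eq_true hwlen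
      have hvtake : (iterF α β n u).take w.length = w := by
        rw [hk, take_ofFn' _ hwk]
        apply List.ext_getElem (by simp)
        intro i h1 h2
        simp only [List.getElem_ofFn]
        simpa using hyw ⟨i, h2⟩
      rw [hvtake] at hne
      simp at hne
end

section
/- Let X be the Cantor space over a finite alphabet 𝒜, T : X → X a computable map, and A ⊆ X a nonempty closed T-invariant set on which T is minimal, i.e. every point of A has forward orbit dense in A. Let n ∈ {1, 2}. If the inner collection {w : [w] ∩ A ≠ ∅} is a Π_n set of words, then it is also a Σ_n set of words. -/
open Filter Topology MeasureTheory Set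
open scoped ENNReal NNReal

section AuxiliaryLemmas
set_option maxHeartbeats 1000000


open Computable in
theorem comp_list_map {α β σ : Type*} [Primcodable α] [Primcodable β] [Primcodable σ]
    {f : α → List β} {g : α → β → σ} (hf : Computable f) (hg : Computable₂ g) :
    Computable fun a => (f a).map (g a) := by
  have hlen : Computable fun a => (f a).length := Primrec.list_length.to_comp.comp hf
  have hget : Computable fun p : α × ℕ × List σ => (f p.1)[p.2.1]? :=
    Primrec.list_getElem?.to_comp.comp (hf.comp fst) (fst.comp snd)
  have hh : Computable₂ fun (a : α) (p : ℕ × List σ) =>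
      Option.casesOn (motive := fun _ => List σ) ((f a)[p.1]?) p.2 (fun b => p.2 ++ [g a b]) := by
    exact Computable.option_casesOn hget (snd.comp snd)
      (Primrec.list_concat.to_comp.comp (snd.comp (snd.comp fst)) (hg.comp (fst.comp fst) snd)).to₂
  have H := Computable.nat_rec hlen (Computable.const ([] : List σ)) hh
  refine H.of_eq fun a => ?_
  have key : ∀ n, (Nat.rec ([] : List σ)
      (fun y IH => Option.casesOn (motive := fun _ => List σ) ((f a)[y]?) IH (fun b => IH ++ [g a b])) n)
      = ((f a).take n).map (g a) := by
    intro n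
    induction n with
    | zero => simp
    | succ n ih =>
      simp only [ih]
      rcases h : (f a)[n]? with _ | b
      · have : (f a).length ≤ n := by
          simpa using List.getElem?_eq_none_iff.mp h
        simp [List.take_of_length_le this, List.take_of_length_le (this.trans (Nat.le_succ n))]
      · have hb : (f a)[n]? = some b := by simpa using h
        simp [List.take_succ, hb]
  exact (key ((f a).length)).trans (by rw [List.take_length])

open Computable in
theorem comp_list_all {α β : Type*} [Primcodable α] [Primcodable β]
    {f : α → List β} {g : α → β → Bool} (hf : Computable f) (hg : Computable₂ g) :
    Computable fun a => (f a).all (g a) := by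
  have hmap := comp_list_map hf hg
  have hall : Primrec fun l : List Bool => l.foldr (fun b s => b && s) true :=
    Primrec.list_foldr Primrec.id (Primrec.const true)
      (Primrec.and.comp (Primrec.fst.comp Primrec.snd) (Primrec.snd.comp Primrec.snd)).to₂
  refine (hall.to_comp.comp hmap).of_eq fun a => ?_
  induction (f a) with
  | nil => rfl
  | cons b l ih => simp [List.all_cons, ih]

open Computable in
theorem comp_list_any {α β : Type*} [Primcodable α] [Primcodable β]
    {f : α → List β} {g : α → β → Bool} (hf : Computable f) (hg : Computable₂ g) :
    Computable fun a => (f a).any (g a) := by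
  have hmap := comp_list_map hf hg
  have hany : Primrec fun l : List Bool => l.foldr (fun b s => b || s) false :=
    Primrec.list_foldr Primrec.id (Primrec.const false)
      (Primrec.or.comp (Primrec.fst.comp Primrec.snd) (Primrec.snd.comp Primrec.snd)).to₂
  refine (hany.to_comp.comp hmap).of_eq fun a => ?_
  induction (f a) with
  | nil => rfl
  | cons b l ih => simp [List.any_cons, ih]

open Computable in
theorem comp_list_take {α : Type*} [Primcodable α] :
    Computable₂ fun (l : List α) (n : ℕ) => l.take n := by
  have h1 : Computable fun p : List α × ℕ =>
      ((List.range p.2).map (fun i =>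
        Option.casesOn (motive := fun _ => List α) (p.1[i]?) [] (fun b => [b]))).flatten := by
    refine Primrec.list_flatten.to_comp.comp ?_
    refine comp_list_map (Primrec.list_range.to_comp.comp snd) ?_
    refine Computable.option_casesOn
      (Primrec.list_getElem?.to_comp.comp (fst.comp fst) snd) (const ([] : List α)) ?_
    exact (Primrec.list_cons.to_comp.comp snd (const ([] : List α))).to₂
  refine h1.of_eq fun p => ?_
  induction p.2 with
  | zero => simp
  | succ n ih =>
    rw [List.range_succ, List.map_append, List.flatten_append, ih]
    rcases h : p.1[n]? with _ | b
    · have : p.1.length ≤ n := by simpa using List.getElem?_eq_none_iff.mp h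
      have h' : p.1[n]? = none := by simpa using h
      simp [h, h', List.take_of_length_le this,
        List.take_of_length_le (this.trans (Nat.le_succ n))]
    · have hb : p.1[n]? = some b := by simpa using h
      simp [h, List.take_succ, hb]

namespace StmtAux

variable {𝒜 : Type} 

/-- prefix of length m -/
def pre (x : ℕ → 𝒜) (m : ℕ) : List 𝒜 := (List.range m).map x

@[simp] theorem pre_length (x : ℕ → 𝒜) (m : ℕ) : (pre x m).length = m := by simp [pre]

theorem pre_getElem (x : ℕ → 𝒜) (m : ℕ) (i : ℕ) (h : i < (pre x m).length) :
    (pre x m)[i] = x i := by simp [pre]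

theorem ofFn_eq_pre (x : ℕ → 𝒜) (m : ℕ) :
    (List.ofFn fun i : Fin m => x i) = pre x m := by
  apply List.ext_getElem <;> simp [pre]

theorem pre_take (x : ℕ → 𝒜) {t m : ℕ} (h : t ≤ m) : (pre x m).take t = pre x t := by
  apply List.ext_getElem
  · simp [pre, Nat.min_eq_left h]
  · intro i h1 h2
    simp only [List.getElem_take]
    rw [pre_getElem, pre_getElem]

theorem mem_cyl_iff (x : ℕ → 𝒜) (w : List 𝒜) : x ∈ cyl w ↔ pre x w.length = w := by
  constructor
  · intro h
    apply List.ext_getElem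
    · simp
    · intro i h1 h2
      rw [pre_getElem]
      simpa [List.get_eq_getElem] using h ⟨i, h2⟩
  · intro h i
    rw [List.get_eq_getElem, List.getElem_of_eq h.symm i.isLt, pre_getElem]

theorem pre_mem_cyl (x : ℕ → 𝒜) (m : ℕ) : x ∈ cyl (pre x m) := by
  rw [mem_cyl_iff, pre_length]

/-- length of maximal true-prefix -/
def tpl (B : List Bool) : ℕ := B.foldr (fun b acc => cond b (acc + 1) 0) 0

@[simp] theorem tpl_nil : tpl ([] : List Bool) = 0 := rfl

theorem tpl_cons (b : Bool) (l : List Bool) : tpl (b :: l) = cond b (tpl l + 1) 0 := rfl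

theorem tpl_le (B : List Bool) : tpl B ≤ B.length := by
  induction B with
  | nil => simp
  | cons b l ih =>
    rcases b <;> simp [tpl_cons] <;> omega

theorem tpl_true (B : List Bool) : ∀ j, (h : j < tpl B) → B[j]'(h.trans_le (tpl_le B)) = true := by
  induction B with
  | nil => simp
  | cons b l ih =>
    rcases hb : b
    · intro j h; simp [tpl_cons, hb] at h
    · rintro (_ | j) h
      · simp
      · simp only [List.getElem_cons_succ]
        exact ih j (by simp [tpl_cons, hb] at h; omega)

theorem le_tpl (B : List Bool) (n : ℕ) (hn : n ≤ B.length)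
    (h : ∀ j, (hj : j < n) → B[j]'(hj.trans_le hn) = true) : n ≤ tpl B := by
  induction B generalizing n with
  | nil => simp at hn; simp [hn]
  | cons b l ih =>
    rcases n with _ | n
    · simp
    · have hb : b = true := h 0 (Nat.succ_pos n)
      have hrec : n ≤ tpl l := ih n (by simpa using hn) (fun j hj => h (j + 1) (by omega))
      simp [tpl_cons, hb]
      omega

variable (α : ℕ → ℕ) (β : ℕ → List 𝒜 → 𝒜)

/-- how many coordinates of `T x` are determined by `m` coordinates of `x` -/
def gam (m : ℕ) : ℕ := tpl ((List.range m).map fun j => decide (α j + 1 ≤ m))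

theorem gam_le (m : ℕ) : gam α m ≤ m := by
  simpa [gam] using tpl_le ((List.range m).map fun j => decide (α j + 1 ≤ m))

theorem gam_spec (m : ℕ) : ∀ j < gam α m, α j + 1 ≤ m := by
  intro j hj
  have h1 : j < ((List.range m).map fun j => decide (α j + 1 ≤ m)).length :=
    hj.trans_le (tpl_le _)
  have := tpl_true ((List.range m).map fun j => decide (α j + 1 ≤ m)) j hj
  simpa using this

theorem le_gam {n m : ℕ} (hnm : n ≤ m) (h : ∀ j < n, α j + 1 ≤ m) : n ≤ gam α m := by
  refine le_tpl _ n (by simpa using hnm) ?_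
  intro j hj
  simpa using h j hj

theorem gam_mono : Monotone (gam α) := by
  intro m m' hm
  exact le_gam α ((gam_le α m).trans hm) (fun j hj => (gam_spec α m j hj).trans hm)

theorem gam_unbounded (n : ℕ) : ∃ m, n ≤ gam α m := by
  refine ⟨n + (Finset.range n).sup (fun j => α j + 1), le_gam α (Nat.le_add_right _ _) ?_⟩
  intro j hj
  have h2 : α j + 1 ≤ (Finset.range n).sup (fun j => α j + 1) :=
    Finset.le_sup (f := fun j => α j + 1) (Finset.mem_range.mpr hj)
  omega

theorem gam_iter_unbounded (k n : ℕ) : ∃ m, n ≤ (gam α)^[k] m := by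
  induction k generalizing n with
  | zero => exact ⟨n, le_refl n⟩
  | succ k ih =>
    obtain ⟨m₁, hm₁⟩ := ih n
    obtain ⟨m, hm⟩ := gam_unbounded α m₁
    refine ⟨m, ?_⟩
    rw [Function.iterate_succ_apply]
    exact le_trans hm₁ ((gam_mono α).iterate k hm)

/-- one-step prefix map -/
def tstep (l : List 𝒜) : List 𝒜 :=
  (List.range (gam α l.length)).map fun j => β j (l.take (α j + 1))

theorem tstep_pre {T : (ℕ → 𝒜) → (ℕ → 𝒜)}
    (hβ : ∀ (x : ℕ → 𝒜) (n : ℕ), T x n = β n (List.ofFn fun i : Fin (α n + 1) => x i))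
    (x : ℕ → 𝒜) (m : ℕ) : tstep α β (pre x m) = pre (T x) (gam α m) := by
  have hl : (pre x m).length = m := pre_length x m
  apply List.ext_getElem
  · simp [tstep, pre, hl]
  · intro i h1 h2
    have hi : i < gam α m := by simpa [tstep, hl] using h1
    have hα : α i + 1 ≤ m := gam_spec α m i hi
    simp only [tstep, hl, List.getElem_map, List.getElem_range, pre_getElem]
    rw [pre_take x hα, ← ofFn_eq_pre, ← hβ]

theorem tstep_iter_pre {T : (ℕ → 𝒜) → (ℕ → 𝒜)}
    (hβ : ∀ (x : ℕ → 𝒜) (n : ℕ), T x n = β n (List.ofFn fun i : Fin (α n + 1) => x i))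
    (k : ℕ) (x : ℕ → 𝒜) (m : ℕ) :
    (tstep α β)^[k] (pre x m) = pre (T^[k] x) ((gam α)^[k] m) := by
  induction k generalizing x m with
  | zero => rfl
  | succ k ih =>
    rw [Function.iterate_succ_apply, Function.iterate_succ_apply,
      Function.iterate_succ_apply, tstep_pre α β hβ, ih]

end StmtAux
namespace StmtAux

variable {𝒜 : Type}

section Top
variable [TopologicalSpace 𝒜] [DiscreteTopology 𝒜]

theorem isOpen_cyl (w : List 𝒜) : IsOpen (cyl w) := by
  have : cyl w = ⋂ i : Fin w.length, (fun x : ℕ → 𝒜 => x i) ⁻¹' {w.get i} := by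
    ext x; simp [cyl, Set.mem_iInter]
  rw [this]
  exact isOpen_iInter_of_finite fun i =>
    (isOpen_discrete _).preimage (continuous_apply (i : ℕ))

theorem isOpen_pre_pred (P : List 𝒜 → Prop) (m : ℕ) :
    IsOpen {x : ℕ → 𝒜 | P (pre x m)} := by
  have : {x : ℕ → 𝒜 | P (pre x m)} = ⋃ v ∈ {v : List 𝒜 | P v ∧ v.length = m}, cyl v := by
    ext x
    simp only [Set.mem_setOf_eq, Set.mem_iUnion]
    constructor
    · intro h
      exact ⟨pre x m, ⟨h, pre_length x m⟩, pre_mem_cyl x m⟩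
    · rintro ⟨v, ⟨hP, hlen⟩, hx⟩
      rw [mem_cyl_iff, hlen] at hx
      rwa [hx]
  rw [this]
  exact isOpen_biUnion fun v _ => isOpen_cyl v

end Top

section Words
variable [Fintype 𝒜]

noncomputable def allWords : ℕ → List (List 𝒜) := fun L =>
  Nat.rec [[]]
    (fun _ IH => IH.flatMap fun v => (Finset.univ.toList : List 𝒜).map (fun a => a :: v)) L

theorem allWords_zero : (allWords 0 : List (List 𝒜)) = [[]] := rfl

theorem allWords_succ (n : ℕ) : (allWords (n + 1) : List (List 𝒜))
    = (allWords n).flatMap fun v => (Finset.univ.toList : List 𝒜).map (fun a => a :: v) := rfl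

theorem mem_allWords (v : List 𝒜) (L : ℕ) : v ∈ (allWords L : List (List 𝒜)) ↔ v.length = L := by
  induction L generalizing v with
  | zero => rw [allWords_zero]; simp [List.length_eq_zero_iff]
  | succ n ih =>
    rw [allWords_succ]
    simp only [List.mem_flatMap, List.mem_map]
    constructor
    · rintro ⟨t, ht, a, -, rfl⟩
      simp [(ih t).mp ht]
    · intro hv
      rcases v with _ | ⟨a, t⟩
      · simp at hv
      · exact ⟨t, (ih t).mpr (by simpa using hv), a, Finset.mem_toList.mpr (Finset.mem_univ a), rfl⟩

end Words

section D
variable [DecidableEq 𝒜] (α : ℕ → ℕ) (β : ℕ → List 𝒜 → 𝒜)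

def dOne (w v : List 𝒜) (N : ℕ) : Bool :=
  (List.range (N + 1)).any fun k => decide (((tstep α β)^[k] v).take w.length = w)

theorem dOne_iff (w v : List 𝒜) (N : ℕ) :
    dOne α β w v N = true ↔ ∃ k ≤ N, ((tstep α β)^[k] v).take w.length = w := by
  simp [dOne, List.any_eq_true, List.mem_range, Nat.lt_succ_iff]

end D

end StmtAux
namespace StmtAux

variable {𝒜 : Type}

theorem pre_take_min (x : ℕ → 𝒜) (t m : ℕ) : (pre x m).take t = pre x (min t m) := by
  apply List.ext_getElem
  · simp [pre]
  · intro i h1 h2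
    simp only [List.getElem_take, pre_getElem]

section Key
variable [Fintype 𝒜] [DecidableEq 𝒜] [TopologicalSpace 𝒜] [DiscreteTopology 𝒜]
variable (α : ℕ → ℕ) (β : ℕ → List 𝒜 → 𝒜) {T : (ℕ → 𝒜) → (ℕ → 𝒜)}

theorem key_sound (hβ : ∀ (x : ℕ → 𝒜) (n : ℕ), T x n = β n (List.ofFn fun i : Fin (α n + 1) => x i))
    {A : Set (ℕ → 𝒜)} (hinv : Set.MapsTo T A A) {x : ℕ → 𝒜} (hxA : x ∈ A)
    (w : List 𝒜) (L N : ℕ) (hD : dOne α β w (pre x L) N = true) :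
    (cyl w ∩ A).Nonempty := by
  obtain ⟨k, hkN, hk⟩ := (dOne_iff α β w (pre x L) N).mp hD
  rw [tstep_iter_pre α β hβ, pre_take_min] at hk
  have hlen : min w.length ((gam α)^[k] L) = w.length := by
    have := congrArg List.length hk
    simpa using this
  rw [hlen] at hk
  exact ⟨T^[k] x, (mem_cyl_iff _ w).mpr hk, (hinv.iterate k) hxA⟩

theorem key_complete
    (hβ : ∀ (x : ℕ → 𝒜) (n : ℕ), T x n = β n (List.ofFn fun i : Fin (α n + 1) => x i))
    {A : Set (ℕ → 𝒜)} (hclosed : IsClosed A)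
    (hmin : ∀ x ∈ A, A ⊆ closure (Set.range fun n : ℕ => T^[n] x)) (w : List 𝒜)
    (hw : (cyl w ∩ A).Nonempty) :
    ∃ N L, ∀ v ∈ (allWords L : List (List 𝒜)), (cyl v ∩ A).Nonempty →
        dOne α β w v N = true := by
  obtain ⟨y, hyw, hyA⟩ := hw
  set m : ℕ → ℕ := fun k => Classical.choose (gam_iter_unbounded α k w.length) with hm
  have hmk : ∀ k, w.length ≤ (gam α)^[k] (m k) := fun k =>
    Classical.choose_spec (gam_iter_unbounded α k w.length)
  set O : ℕ → Set (ℕ → 𝒜) := fun k => (fun x => T^[k] x) ⁻¹' cyl w with hO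
  have hOopen : ∀ k, IsOpen (O k) := by
    intro k
    have : O k = {x : ℕ → 𝒜 | (((tstep α β)^[k] (pre x (m k))).take w.length = w)} := by
      ext x
      rw [hO]
      simp only [Set.mem_preimage, Set.mem_setOf_eq]
      rw [mem_cyl_iff, tstep_iter_pre α β hβ, pre_take (T^[k] x) (hmk k)]
    rw [this]
    exact isOpen_pre_pred (fun v => ((tstep α β)^[k] v).take w.length = w) (m k)
  have hcover : A ⊆ ⋃ k : ℕ, O k := by
    intro x hx
    have hy : y ∈ closure (Set.range fun n : ℕ => T^[n] x) := hmin x hx hyA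
    obtain ⟨z, hz1, k, rfl⟩ :=
      (mem_closure_iff.mp hy (cyl w) (isOpen_cyl w) hyw)
    exact Set.mem_iUnion.mpr ⟨k, hz1⟩
  obtain ⟨t, ht⟩ := (hclosed.isCompact).elim_finite_subcover O hOopen hcover
  set N := t.sup id with hN
  set L := (Finset.range (N + 1)).sup m with hL
  refine ⟨N, L, ?_⟩
  intro v hv hvA
  obtain ⟨x, hxv, hxA⟩ := hvA
  have hvlen : v.length = L := (mem_allWords v L).mp hv
  have hvx : pre x L = v := by
    rw [← hvlen]; exact (mem_cyl_iff x v).mp hxv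
  obtain ⟨k, hkN, hkw⟩ : ∃ k ≤ N, T^[k] x ∈ cyl w := by
    obtain ⟨k, hk, hxk⟩ := Set.mem_iUnion₂.mp (ht hxA)
    exact ⟨k, Finset.le_sup (f := id) hk, hxk⟩
  rw [dOne_iff]
  refine ⟨k, hkN, ?_⟩
  have hmL : m k ≤ L := Finset.le_sup (Finset.mem_range.mpr (Nat.lt_succ_of_le hkN))
  have hwL : w.length ≤ (gam α)^[k] L := (hmk k).trans ((gam_mono α).iterate k hmL)
  rw [← hvx, tstep_iter_pre α β hβ, pre_take _ hwL]
  exact (mem_cyl_iff _ w).mp hkw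

end Key
end StmtAux
namespace StmtAux
open Computable

variable {𝒜 : Type} [Primcodable 𝒜] [DecidableEq 𝒜]
variable {α : ℕ → ℕ} {β : ℕ → List 𝒜 → 𝒜}

theorem tpl_primrec : Primrec tpl := by
  have : Primrec fun B : List Bool => B.foldr (fun b acc => cond b (acc + 1) 0) 0 := by
    refine Primrec.list_foldr (f := @id (List Bool)) (g := fun _ => (0 : ℕ))
      (h := fun _ p => cond p.1 (p.2 + 1) 0) Primrec.id (Primrec.const 0) ?_
    exact (Primrec.cond (Primrec.fst.comp Primrec.snd)
      (Primrec.succ.comp (Primrec.snd.comp Primrec.snd)) (Primrec.const 0)).to₂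
  exact this.of_eq fun B => rfl

theorem gam_computable (hα : Computable α) : Computable (gam α) := by
  have hmap : Computable fun m : ℕ => (List.range m).map fun j => decide (α j + 1 ≤ m) := by
    refine comp_list_map (f := List.range)
      (g := fun m j => decide (α j + 1 ≤ m)) Primrec.list_range.to_comp ?_
    exact (Primrec₂.to_comp Primrec.nat_le.decide
      |>.comp (Computable.succ.comp (hα.comp Computable.snd)) Computable.fst).to₂
  exact (tpl_primrec.to_comp.comp hmap).of_eq fun m => rfl

theorem tstep_computable (hα : Computable α) (hβ : Computable₂ β) :
    Computable (tstep α β) := by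
  have hlen : Computable fun l : List 𝒜 => gam α l.length :=
    (gam_computable hα).comp Primrec.list_length.to_comp
  refine (comp_list_map (Primrec.list_range.to_comp.comp hlen) ?_).of_eq fun l => rfl
  exact (hβ.comp Computable.snd (comp_list_take.comp Computable.fst
    (Computable.succ.comp (hα.comp Computable.snd)))).to₂

theorem tstep_iter_computable (hα : Computable α) (hβ : Computable₂ β) :
    Computable₂ fun (k : ℕ) (l : List 𝒜) => (tstep α β)^[k] l := by
  have h := Computable.nat_rec (f := fun p : ℕ × List 𝒜 => p.1)
    (g := fun p : ℕ × List 𝒜 => p.2)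
    (h := fun (_ : ℕ × List 𝒜) (q : ℕ × List 𝒜) => tstep α β q.2)
    Computable.fst Computable.snd
    ((tstep_computable hα hβ).comp (Computable.snd.comp Computable.snd)).to₂
  have h2 : Computable fun p : ℕ × List 𝒜 => (tstep α β)^[p.1] p.2 := by
    refine h.of_eq fun p => ?_
    obtain ⟨k, l⟩ := p
    induction k with
    | zero => rfl
    | succ k ih => simp only at ih ⊢; rw [Function.iterate_succ_apply']; simp [ih]
  exact h2.to₂

theorem dOne_computable (hα : Computable α) (hβ : Computable₂ β)
    {θ : Type*} [Primcodable θ] {F G : θ → List 𝒜} {H : θ → ℕ}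
    (hF : Computable F) (hG : Computable G) (hH : Computable H) :
    Computable fun t => dOne α β (F t) (G t) (H t) := by
  refine (comp_list_any (f := fun t => List.range (H t + 1))
    (g := fun t k => decide (((tstep α β)^[k] (G t)).take (F t).length = F t))
    (Primrec.list_range.to_comp.comp (Computable.succ.comp hH)) ?_).of_eq fun t => rfl
  have h2 : Computable fun p : θ × ℕ => F p.1 := hF.comp Computable.fst
  have h1 : Computable fun p : θ × ℕ => ((tstep α β)^[p.2] (G p.1)).take (F p.1).length :=
    comp_list_take.comp
      ((tstep_iter_computable hα hβ).comp Computable.snd (hG.comp Computable.fst))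
      (Primrec.list_length.to_comp.comp h2)
  exact ((Primrec₂.to_comp (Primrec.eq (α := List 𝒜)).decide).comp h1 h2).to₂

theorem allWords_computable [Fintype 𝒜] : Computable (allWords : ℕ → List (List 𝒜)) := by
  have hstep : Primrec fun vl : List (List 𝒜) =>
      vl.flatMap fun v => (Finset.univ.toList : List 𝒜).map (fun a => a :: v) := by
    refine Primrec.list_flatMap (f := @id (List (List 𝒜)))
      (g := fun _ v => (Finset.univ.toList : List 𝒜).map (fun a => a :: v)) Primrec.id ?_
    refine (Primrec.list_map (f := fun _ : List (List 𝒜) × List 𝒜 => (Finset.univ.toList : List 𝒜))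
      (g := fun p a => a :: p.2) (Primrec.const (Finset.univ.toList : List 𝒜)) ?_).to₂
    exact (Primrec.list_cons.comp Primrec.snd (Primrec.snd.comp Primrec.fst)).to₂
  have h := Computable.nat_rec (f := @id ℕ) (g := fun _ : ℕ => ([[]] : List (List 𝒜)))
    (h := fun (_ : ℕ) (q : ℕ × List (List 𝒜)) =>
      q.2.flatMap fun v => (Finset.univ.toList : List 𝒜).map (fun a => a :: v))
    Computable.id (Computable.const _)
    (hstep.to_comp.comp (Computable.snd.comp Computable.snd)).to₂
  exact h.of_eq fun n => rfl

end StmtAux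
namespace StmtAux
open Computable

variable {𝒜 : Type} [Primcodable 𝒜] [Fintype 𝒜] [DecidableEq 𝒜]
  [TopologicalSpace 𝒜] [DiscreteTopology 𝒜]
variable (α : ℕ → ℕ) (β : ℕ → List 𝒜 → 𝒜) {T : (ℕ → 𝒜) → (ℕ → 𝒜)}

theorem case_one (hαc : Computable α) (hβc : Computable₂ β)
    (hβ : ∀ (x : ℕ → 𝒜) (n : ℕ), T x n = β n (List.ofFn fun i : Fin (α n + 1) => x i))
    {A : Set (ℕ → 𝒜)} (hclosed : IsClosed A) (hne : A.Nonempty)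
    (hinv : Set.MapsTo T A A)
    (hmin : ∀ x ∈ A, A ⊆ closure (Set.range fun n : ℕ => T^[n] x))
    (hpi : PiOne {w : List 𝒜 | (cyl w ∩ A).Nonempty}) :
    SigmaOne {w : List 𝒜 | (cyl w ∩ A).Nonempty} := by
  obtain ⟨g, hgc, hg⟩ := hpi
  refine ⟨fun p => ((allWords p.2.unpair.2.unpair.1 : List (List 𝒜))).all fun v =>
    dOne α β p.1 v p.2.unpair.1 || (List.range p.2.unpair.2.unpair.2).any fun a => g (v, a),
    ?_, ?_⟩
  · refine comp_list_all ?_ ?_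
    · exact allWords_computable.comp (Computable.fst.comp (Computable.unpair.comp
        (Computable.snd.comp (Computable.unpair.comp Computable.snd))))
    · have hd : Computable fun q : (List 𝒜 × ℕ) × List 𝒜 =>
          dOne α β q.1.1 q.2 q.1.2.unpair.1 :=
        dOne_computable hαc hβc (Computable.fst.comp Computable.fst) Computable.snd
          (Computable.fst.comp (Computable.unpair.comp (Computable.snd.comp Computable.fst)))
      have hany : Computable fun q : (List 𝒜 × ℕ) × List 𝒜 =>
          (List.range q.1.2.unpair.2.unpair.2).any fun a => g (q.2, a) := by
        refine comp_list_any ?_ ?_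
        · exact Primrec.list_range.to_comp.comp (Computable.snd.comp (Computable.unpair.comp
            (Computable.snd.comp (Computable.unpair.comp (Computable.snd.comp Computable.fst)))))
        · exact (hgc.comp (Computable.pair (Computable.snd.comp Computable.fst)
            Computable.snd)).to₂
      exact ((Primrec₂.to_comp Primrec.or).comp hd hany).to₂
  · intro w
    constructor
    · intro hw
      obtain ⟨N, L, H⟩ := key_complete α β hβ hclosed hmin w hw
      classical
      set R : List 𝒜 → ℕ := fun v =>
        if hv : (cyl v ∩ A).Nonempty then 0 else Classical.choose ((hg v).mp hv) with hR
      set s := ((allWords L : List (List 𝒜)).toFinset.sup R) + 1 with hs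
      refine ⟨Nat.pair N (Nat.pair L s), ?_⟩
      simp only [Nat.unpair_pair]
      rw [List.all_eq_true]
      intro v hv
      rw [Bool.or_eq_true]
      by_cases hvA : (cyl v ∩ A).Nonempty
      · left; exact H v hv hvA
      · right
        rw [List.any_eq_true]
        have hRv : R v = Classical.choose ((hg v).mp hvA) := dif_neg hvA
        refine ⟨R v, List.mem_range.mpr ?_, ?_⟩
        · have h1 : R v ≤ (allWords L : List (List 𝒜)).toFinset.sup R :=
            Finset.le_sup (List.mem_toFinset.mpr hv)
          omega
        · rw [hRv]; exact Classical.choose_spec ((hg v).mp hvA)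
    · rintro ⟨m, hm⟩
      obtain ⟨x, hxA⟩ := hne
      have hv : pre x (m.unpair.2.unpair.1) ∈ (allWords m.unpair.2.unpair.1 : List (List 𝒜)) :=
        (mem_allWords _ _).mpr (pre_length x _)
      have h1 := List.all_eq_true.mp hm (pre x (m.unpair.2.unpair.1)) hv
      rw [Bool.or_eq_true] at h1
      rcases h1 with hd | hany
      · exact key_sound α β hβ hinv hxA w _ _ hd
      · exfalso
        rw [List.any_eq_true] at hany
        obtain ⟨a, -, hga⟩ := hany
        have hc : pre x (m.unpair.2.unpair.1) ∈ {w : List 𝒜 | (cyl w ∩ A).Nonempty}ᶜ :=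
          (hg _).mpr ⟨a, hga⟩
        exact hc ⟨x, pre_mem_cyl x _, hxA⟩

end StmtAux
namespace StmtAux
open Computable

variable {𝒜 : Type} [Primcodable 𝒜] [Fintype 𝒜] [DecidableEq 𝒜]
  [TopologicalSpace 𝒜] [DiscreteTopology 𝒜]
variable (α : ℕ → ℕ) (β : ℕ → List 𝒜 → 𝒜) {T : (ℕ → 𝒜) → (ℕ → 𝒜)}

theorem case_two (hαc : Computable α) (hβc : Computable₂ β)
    (hβ : ∀ (x : ℕ → 𝒜) (n : ℕ), T x n = β n (List.ofFn fun i : Fin (α n + 1) => x i))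
    {A : Set (ℕ → 𝒜)} (hclosed : IsClosed A) (hne : A.Nonempty)
    (hinv : Set.MapsTo T A A)
    (hmin : ∀ x ∈ A, A ⊆ closure (Set.range fun n : ℕ => T^[n] x))
    (hpi : PiTwo {w : List 𝒜 | (cyl w ∩ A).Nonempty}) :
    SigmaTwo {w : List 𝒜 | (cyl w ∩ A).Nonempty} := by
  obtain ⟨g, hgc, hg⟩ := hpi
  refine ⟨fun p =>
    (List.range (allWords p.2.1.unpair.2.unpair.1 : List (List 𝒜)).length).all fun i =>
      dOne α β p.1 ((allWords p.2.1.unpair.2.unpair.1 : List (List 𝒜)).getD i [])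
          p.2.1.unpair.1 ||
        !(g ((allWords p.2.1.unpair.2.unpair.1 : List (List 𝒜)).getD i [],
          (Denumerable.ofNat (List ℕ) p.2.1.unpair.2.unpair.2).getD i 0, p.2.2)),
    ?_, ?_⟩
  · have hL : Computable fun p : List 𝒜 × ℕ × ℕ => p.2.1.unpair.2.unpair.1 :=
      Computable.fst.comp (Computable.unpair.comp
        (Computable.snd.comp (Computable.unpair.comp (Computable.fst.comp Computable.snd))))
    have hws : Computable fun p : List 𝒜 × ℕ × ℕ => (allWords p.2.1.unpair.2.unpair.1 :
        List (List 𝒜)) := allWords_computable.comp hL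
    refine comp_list_all (Primrec.list_range.to_comp.comp
      (Primrec.list_length.to_comp.comp hws)) ?_
    have hgetv : Computable fun q : (List 𝒜 × ℕ × ℕ) × ℕ =>
        (allWords q.1.2.1.unpair.2.unpair.1 : List (List 𝒜)).getD q.2 [] :=
      (Primrec₂.to_comp (Primrec.list_getD ([] : List 𝒜))).comp
        (hws.comp Computable.fst) Computable.snd
    have hd : Computable fun q : (List 𝒜 × ℕ × ℕ) × ℕ =>
        dOne α β q.1.1 ((allWords q.1.2.1.unpair.2.unpair.1 : List (List 𝒜)).getD q.2 [])
          q.1.2.1.unpair.1 :=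
      dOne_computable hαc hβc (Computable.fst.comp Computable.fst) hgetv
        (Computable.fst.comp (Computable.unpair.comp
          (Computable.fst.comp (Computable.snd.comp Computable.fst))))
    have hsig : Computable fun q : (List 𝒜 × ℕ × ℕ) × ℕ =>
        (Denumerable.ofNat (List ℕ) q.1.2.1.unpair.2.unpair.2).getD q.2 0 :=
      (Primrec₂.to_comp (Primrec.list_getD (0 : ℕ))).comp
        ((Primrec.ofNat (List ℕ)).to_comp.comp
          (Computable.snd.comp (Computable.unpair.comp (Computable.snd.comp
            (Computable.unpair.comp (Computable.fst.comp (Computable.snd.comp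
              Computable.fst))))))) Computable.snd
    have hnot : Computable fun q : (List 𝒜 × ℕ × ℕ) × ℕ =>
        !(g ((allWords q.1.2.1.unpair.2.unpair.1 : List (List 𝒜)).getD q.2 [],
          (Denumerable.ofNat (List ℕ) q.1.2.1.unpair.2.unpair.2).getD q.2 0, q.1.2.2)) :=
      Primrec.not.to_comp.comp (hgc.comp (Computable.pair hgetv (Computable.pair hsig
        (Computable.snd.comp (Computable.snd.comp Computable.fst)))))
    exact ((Primrec₂.to_comp Primrec.or).comp hd hnot).to₂
  · intro w
    constructor
    · intro hw
      obtain ⟨N, L, H⟩ := key_complete α β hβ hclosed hmin w hw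
      classical
      have hch : ∀ v : List 𝒜, ¬(cyl v ∩ A).Nonempty → ∃ a, ∀ b, g (v, a, b) = false := by
        intro v hv
        have : ¬ ∀ a, ∃ b, g (v, a, b) = true := fun hall => hv ((hg v).mpr hall)
        push_neg at this
        obtain ⟨a, ha⟩ := this
        exact ⟨a, fun b => Bool.eq_false_iff.mpr (ha b)⟩
      set R : List 𝒜 → ℕ := fun v =>
        if hv : (cyl v ∩ A).Nonempty then 0 else Classical.choose (hch v hv) with hRdef
      refine ⟨Nat.pair N (Nat.pair L (Encodable.encode
        ((allWords L : List (List 𝒜)).map R))), fun b => ?_⟩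
      simp only [Nat.unpair_pair, Denumerable.ofNat_encode]
      rw [List.all_eq_true]
      intro i hi
      rw [List.mem_range] at hi
      rw [Bool.or_eq_true]
      have hgetv : (allWords L : List (List 𝒜)).getD i [] = (allWords L : List (List 𝒜))[i] :=
        List.getD_eq_getElem _ [] hi
      have hmem : (allWords L : List (List 𝒜))[i] ∈ (allWords L : List (List 𝒜)) :=
        List.getElem_mem hi
      have hgetσ : ((allWords L : List (List 𝒜)).map R).getD i 0
          = R ((allWords L : List (List 𝒜))[i]) := by
        have hi' : i < ((allWords L : List (List 𝒜)).map R).length := by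
          rw [List.length_map]; exact hi
        rw [List.getD_eq_getElem _ 0 hi', List.getElem_map]
      by_cases hvA : (cyl ((allWords L : List (List 𝒜))[i]) ∩ A).Nonempty
      · left; rw [hgetv]; exact H _ hmem hvA
      · right
        rw [hgetv, hgetσ]
        have hRv : R ((allWords L : List (List 𝒜))[i])
            = Classical.choose (hch _ hvA) := dif_neg hvA
        rw [hRv]
        have := Classical.choose_spec (hch ((allWords L : List (List 𝒜))[i]) hvA) b
        simp [this]
    · rintro ⟨m, hm⟩
      obtain ⟨x, hxA⟩ := hne
      set L := m.unpair.2.unpair.1 with hL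
      set ws : List (List 𝒜) := (allWords L : List (List 𝒜)) with hws
      have hv : pre x L ∈ ws := (mem_allWords _ _).mpr (pre_length x L)
      obtain ⟨i, hi, hiv⟩ := List.mem_iff_getElem.mp hv
      have hgetv : ws.getD i [] = pre x L := by
        rw [List.getD_eq_getElem ws [] hi, hiv]
      by_cases hd : dOne α β w (pre x L) m.unpair.1 = true
      · exact key_sound α β hβ hinv hxA w _ _ hd
      · exfalso
        obtain ⟨b, hb⟩ := (hg (pre x L)).mp ⟨x, pre_mem_cyl x L, hxA⟩
          ((Denumerable.ofNat (List ℕ) m.unpair.2.unpair.2).getD i 0)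
        have h1 := List.all_eq_true.mp (hm b) i (List.mem_range.mpr hi)
        rw [Bool.or_eq_true, hgetv] at h1
        rcases h1 with h1 | h1
        · exact hd h1
        · rw [hb] at h1; simp at h1

end StmtAux

end AuxiliaryLemmas

/-- If a computable map of Cantor space is minimal on a nonempty closed invariant set `A`
(every point of `A` has dense forward orbit in `A`), then for `n ∈ {1,2}`:
if the inner collection of `A` is Π_n, it is also Σ_n. -/
theorem stmt9 {𝒜 : Type} [Fintype 𝒜] [Primcodable 𝒜]
    [TopologicalSpace 𝒜] [DiscreteTopology 𝒜]
    {T : (ℕ → 𝒜) → (ℕ → 𝒜)} (hT : CantorComputable T)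
    {A : Set (ℕ → 𝒜)} (hclosed : IsClosed A) (hne : A.Nonempty)
    (hinv : Set.MapsTo T A A)
    (hmin : ∀ x ∈ A, A ⊆ closure (Set.range fun n : ℕ => T^[n] x)) :
    (PiOne {w : List 𝒜 | (cyl w ∩ A).Nonempty} →
      SigmaOne {w : List 𝒜 | (cyl w ∩ A).Nonempty}) ∧
    (PiTwo {w : List 𝒜 | (cyl w ∩ A).Nonempty} →
      SigmaTwo {w : List 𝒜 | (cyl w ∩ A).Nonempty}) := by
  letI : DecidableEq 𝒜 := Encodable.decidableEqOfEncodable 𝒜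
  obtain ⟨α, β, hαc, hβc, hβ⟩ := hT
  exact ⟨StmtAux.case_one α β hαc hβc hβ hclosed hne hinv hmin,
    StmtAux.case_two α β hαc hβc hβ hclosed hne hinv hmin⟩
end

section
/- Let Halt = {l ∈ ℕ : M_l halts on input 0}, let A ⊆ X = ℕ → {0,1} be the subshift of all sequences containing no factor 0 1^l 0 with l ∈ Halt (i.e. there are no j ∈ ℕ and l ≥ 1 with l ∈ Halt, x_j = 0, x_{j+l+1} = 0 and x_k = 1 for all j < k < j+l+1), and let T : X → X be defined coordinatewise by: T(x)_i = 0 if there exist j₁, j₂ with j₁ ≤ i < j₂ ≤ 2i such that x_{j₁} = 0, x_{j₂} = 0, x_k = 1 for all j₁ < k < j₂, the number l = j₂ − j₁ − 1 satisfies 1 ≤ l ≤ j₁, and M_l halts on input 0 within j₁ computation steps; otherwise T(x)_i = x_{i+1}. Then ⋂_{n∈ℕ} T^n(X) = A; in particular ω(x) ⊆ A for every x ∈ X. -/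
open Filter Topology MeasureTheory Set
open scoped ENNReal NNReal

/-- The subshift of `{0,1}^ℕ` avoiding all factors `0 1^l 0` with `l ∈ Halt`. -/
def A12 : Set (ℕ → Fin 2) :=
  {x | ¬ ∃ (j l : ℕ), 1 ≤ l ∧ l ∈ HaltSet ∧ x j = 0 ∧ x (j + l + 1) = 0 ∧
        ∀ k, j < k → k < j + l + 1 → x k = 1}

open Classical in
/-- The map of Theorem `stmt12`: erase blocks of 1's whose length is the index of a halting
machine (with time/position bounds), then shift. -/
noncomputable def T12 : (ℕ → Fin 2) → (ℕ → Fin 2) := fun x i =>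
  if ∃ j₁ j₂ : ℕ, j₁ ≤ i ∧ i < j₂ ∧ j₂ ≤ 2 * i ∧
      x j₁ = 0 ∧ x j₂ = 0 ∧ (∀ k, j₁ < k → k < j₂ → x k = 1) ∧
      1 ≤ j₂ - j₁ - 1 ∧ j₂ - j₁ - 1 ≤ j₁ ∧
      (Nat.Partrec.Code.evaln j₁
        (Denumerable.ofNat Nat.Partrec.Code (j₂ - j₁ - 1)) 0).isSome = true
  then 0 else x (i + 1)


section Aux12

open Nat.Partrec.Code

/-- The erasure condition of `T12`. -/
def CondT (z : ℕ → Fin 2) (i : ℕ) : Prop :=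
  ∃ j₁ j₂ : ℕ, j₁ ≤ i ∧ i < j₂ ∧ j₂ ≤ 2 * i ∧
      z j₁ = 0 ∧ z j₂ = 0 ∧ (∀ k, j₁ < k → k < j₂ → z k = 1) ∧
      1 ≤ j₂ - j₁ - 1 ∧ j₂ - j₁ - 1 ≤ j₁ ∧
      (Nat.Partrec.Code.evaln j₁
        (Denumerable.ofNat Nat.Partrec.Code (j₂ - j₁ - 1)) 0).isSome = true

lemma T12_pos {z : ℕ → Fin 2} {i : ℕ} (h : CondT z i) : T12 z i = 0 := by
  unfold CondT at h
  unfold T12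
  rw [if_pos h]

lemma T12_neg {z : ℕ → Fin 2} {i : ℕ} (h : ¬ CondT z i) : T12 z i = z (i + 1) := by
  unfold CondT at h
  unfold T12
  rw [if_neg h]

/-- Occurrence of a block `0 1^L 0` at position `p`. -/
def Blk (y : ℕ → Fin 2) (p L : ℕ) : Prop :=
  y p = 0 ∧ y (p + L + 1) = 0 ∧ ∀ k, p < k → k < p + L + 1 → y k = 1

lemma blk_unique {y : ℕ → Fin 2} {p L L' : ℕ} (h : Blk y p L) (h' : Blk y p L') : L = L' := by
  by_contra hne
  rcases Nat.lt_or_ge L L' with hlt | hge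
  · have h1 := h'.2.2 (p + L + 1) (by omega) (by omega)
    exact absurd (h.2.1.symm.trans h1) (by decide)
  · have hlt : L' < L := lt_of_le_of_ne hge (Ne.symm hne)
    have h1 := h.2.2 (p + L' + 1) (by omega) (by omega)
    exact absurd (h'.2.1.symm.trans h1) (by decide)

lemma evaln_isSome_mono {s s' e : ℕ} (h : s ≤ s')
    (hs : (Nat.Partrec.Code.evaln s (Denumerable.ofNat Nat.Partrec.Code e) 0).isSome = true) :
    (Nat.Partrec.Code.evaln s' (Denumerable.ofNat Nat.Partrec.Code e) 0).isSome = true := by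
  rw [Option.isSome_iff_exists] at hs ⊢
  obtain ⟨a, ha⟩ := hs
  exact ⟨a, Nat.Partrec.Code.evaln_mono h ha⟩

lemma fire {z : ℕ → Fin 2} {q L : ℕ} (h1 : 1 ≤ L) (h2 : L + 1 ≤ q)
    (hB : Blk z q L)
    (he : (Nat.Partrec.Code.evaln q (Denumerable.ofNat Nat.Partrec.Code L) 0).isSome = true) :
    T12 z q = 0 := by
  apply T12_pos
  refine ⟨q, q + L + 1, le_refl q, by omega, by omega, hB.1, hB.2.1, hB.2.2, by omega, by omega, ?_⟩
  have hq : q + L + 1 - q - 1 = L := by omega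
  rw [hq]
  exact he

lemma of_one {z : ℕ → Fin 2} {i : ℕ} (h : T12 z i = 1) : ¬ CondT z i ∧ z (i + 1) = 1 := by
  by_cases hc : CondT z i
  · rw [T12_pos hc] at h
    exact absurd h (by decide)
  · exact ⟨hc, (T12_neg hc).symm.trans h⟩

/-- The backward-step lemma: a block in `T12 z` at `p` comes from a block in `z` at `p+1`,
either of the same length, or (erasure case) of length exactly `p+1` with a halting witness. -/
lemma step12 {z : ℕ → Fin 2} {p L : ℕ} (hL : 1 ≤ L) (hB : Blk (T12 z) p L) :
    ∃ L', 1 ≤ L' ∧ Blk z (p + 1) L' ∧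
      (L' = L ∨ (L = 1 ∧ L' = p + 1 ∧
        (Nat.Partrec.Code.evaln (p + 1)
          (Denumerable.ofNat Nat.Partrec.Code L') 0).isSome = true)) := by
  obtain ⟨h0, hR, h1s⟩ := hB
  have hz1 : ∀ k, p + 1 < k → k < p + 1 + L + 1 → z k = 1 := by
    intro k hk1 hk2
    have h := of_one (h1s (k - 1) (by omega) (by omega))
    have hkk : k - 1 + 1 = k := by omega
    rw [hkk] at h
    exact h.2
  have hnc : ∀ m, p < m → m < p + L + 1 → ¬ CondT z m := by
    intro m hm1 hm2
    exact (of_one (h1s m hm1 hm2)).1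
  have hzl : z (p + 1) = 0 := by
    by_cases hc : CondT z p
    · obtain ⟨j₁, j₂, hji, hij, hj2i, hzj1, hzj2, hones, hl1, hl2, hev⟩ := hc
      have hj2 : j₂ = p + 1 := by
        by_contra hne
        have hlt : p + 1 < j₂ := by omega
        exact hnc (p + 1) (by omega) (by omega)
          ⟨j₁, j₂, by omega, hlt, by omega, hzj1, hzj2, hones, hl1, hl2, hev⟩
      rw [← hj2]
      exact hzj2
    · exact (T12_neg hc).symm.trans h0
  by_cases hc : CondT z (p + L + 1)
  · obtain ⟨j₁, j₂, hji, hij, hj2i, hzj1, hzj2, hones, hl1, hl2, hev⟩ := hc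
    have hj1 : j₁ = p + 1 := by
      rcases Nat.lt_trichotomy j₁ (p + 1) with h | h | h
      · have h1 : z (p + 1) = 1 := hones (p + 1) h (by omega)
        exact absurd (hzl.symm.trans h1) (by decide)
      · exact h
      · have h1 : z j₁ = 1 := hz1 j₁ h (by omega)
        exact absurd (hzj1.symm.trans h1) (by decide)
    subst hj1
    have hj2big : 2 * (p + L) < j₂ := by
      by_contra hle
      push_neg at hle
      exact hnc (p + L) (by omega) (by omega)
        ⟨p + 1, j₂, by omega, by omega, hle, hzj1, hzj2, hones, hl1, hl2, hev⟩
    have hLval : L = 1 ∧ j₂ = 2 * p + 3 := by omega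
    refine ⟨p + 1, by omega, ⟨hzj1, ?_, ?_⟩, Or.inr ⟨hLval.1, rfl, ?_⟩⟩
    · have he : p + 1 + (p + 1) + 1 = j₂ := by omega
      rw [he]
      exact hzj2
    · intro k hk1 hk2
      exact hones k hk1 (by omega)
    · have he : j₂ - (p + 1) - 1 = p + 1 := by omega
      rw [he] at hev
      exact hev
  · refine ⟨L, hL, ⟨hzl, ?_, hz1⟩, Or.inl rfl⟩
    have he : p + 1 + L + 1 = p + L + 1 + 1 := by omega
    rw [he]
    exact (T12_neg hc).symm.trans hR

/-- Key lemma: a configuration containing a halting-certified block is not in the range of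
a sufficiently high iterate of `T12`. -/
lemma not_in_image12 {y : ℕ → Fin 2} {j l s₀ : ℕ} (hl : 1 ≤ l)
    (hs : (Nat.Partrec.Code.evaln s₀ (Denumerable.ofNat Nat.Partrec.Code l) 0).isSome = true)
    (hB : Blk y j l) :
    y ∉ T12^[l + s₀ + 3] '' Set.univ := by
  rintro ⟨x, -, hx⟩
  set n := l + s₀ + 3 with hn
  have Inv : ∀ k, k ≤ n → ∃ L, 1 ≤ L ∧ Blk (T12^[n - k] x) (j + k) L ∧
      (L = l ∨ (L ≤ j + k ∧ (Nat.Partrec.Code.evaln (j + k)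
        (Denumerable.ofNat Nat.Partrec.Code L) 0).isSome = true)) := by
    intro k
    induction k with
    | zero =>
      intro _
      refine ⟨l, hl, ?_, Or.inl rfl⟩
      have : T12^[n - 0] x = y := by simpa using hx
      rw [this]
      simpa using hB
    | succ k ih =>
      intro hk
      obtain ⟨L, hL1, hLB, hLd⟩ := ih (by omega)
      have hiter : T12^[n - k] x = T12 (T12^[n - (k + 1)] x) := by
        have he : n - k = (n - (k + 1)) + 1 := by omega
        rw [he, Function.iterate_succ_apply']
      rw [hiter] at hLB
      obtain ⟨L', hL'1, hL'B, hL'd⟩ := step12 hL1 hLB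
      have hidx : j + k + 1 = j + (k + 1) := by omega
      rw [hidx] at hL'B
      refine ⟨L', hL'1, hL'B, ?_⟩
      rcases hL'd with rfl | ⟨-, rfl, hev⟩
      · rcases hLd with h | ⟨h1, h2⟩
        · exact Or.inl h
        · exact Or.inr ⟨by omega, evaln_isSome_mono (by omega) h2⟩
      · rw [hidx] at hev
        exact Or.inr ⟨by omega, hev⟩
  obtain ⟨Ln, hLn1, hLnB, hLnd⟩ := Inv n le_rfl
  obtain ⟨Lm, hLm1, hLmB, hLmd⟩ := Inv (n - 1) (by omega)
  obtain ⟨Lp, hLp1, hLpB, hLpd⟩ := Inv (n - 2) (by omega)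
  have e1 : n - (n - 1) = 1 := by omega
  have e2 : n - (n - 2) = 2 := by omega
  have e0 : n - n = 0 := by omega
  rw [e1, Function.iterate_one] at hLmB
  rw [e2, show T12^[2] x = T12 (T12 x) from
    (Function.iterate_succ_apply' T12 1 x).trans (by rw [Function.iterate_one])] at hLpB
  rw [e0, Function.iterate_zero_apply] at hLnB
  have hevn : (Nat.Partrec.Code.evaln (j + n)
      (Denumerable.ofNat Nat.Partrec.Code Ln) 0).isSome = true := by
    rcases hLnd with rfl | ⟨-, h⟩
    · exact evaln_isSome_mono (by omega) hs
    · exact h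
  by_cases hcase : Ln + 1 ≤ j + n
  · have hfire : T12 x (j + n) = 0 := fire hLn1 hcase hLnB hevn
    have hone : T12 x (j + n) = 1 := hLmB.2.2 (j + n) (by omega) (by omega)
    exact absurd (hfire.symm.trans hone) (by decide)
  · have hLneq : Ln = j + n := by
      rcases hLnd with rfl | ⟨h, -⟩ <;> omega
    obtain ⟨L', hL'1, hL'B, hL'd⟩ := step12 hLm1 hLmB
    have eI : j + (n - 1) + 1 = j + n := by omega
    rw [eI] at hL'B
    have hLL : L' = Ln := blk_unique hL'B hLnB
    subst hLL
    rcases hL'd with hEq | ⟨hLm_one, -, -⟩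
    · rcases hLmd with rfl | ⟨h, -⟩ <;> omega
    · have hevm : (Nat.Partrec.Code.evaln (j + (n - 1))
          (Denumerable.ofNat Nat.Partrec.Code Lm) 0).isSome = true := by
        rcases hLmd with rfl | ⟨-, h⟩
        · exact evaln_isSome_mono (by omega) hs
        · exact h
      have hfire : T12 (T12 x) (j + (n - 1)) = 0 := fire hLm1 (by omega) hLmB hevm
      have hone : T12 (T12 x) (j + (n - 1)) = 1 := hLpB.2.2 (j + (n - 1)) (by omega) (by omega)
      exact absurd (hfire.symm.trans hone) (by decide)

/-- Prepending a `1` to a member of `A12`. -/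
def ext12 (y : ℕ → Fin 2) : ℕ → Fin 2 := fun i => Nat.rec 1 (fun k _ => y k) i

lemma ext12_zero (y : ℕ → Fin 2) : ext12 y 0 = 1 := rfl

lemma ext12_succ (y : ℕ → Fin 2) (k : ℕ) : ext12 y (k + 1) = y k := rfl

lemma ext12_mem {y : ℕ → Fin 2} (hy : y ∈ A12) : ext12 y ∈ A12 := by
  rintro ⟨j, l, hl, hHalt, hx0, hx1, hx2⟩
  cases j with
  | zero => exact absurd ((ext12_zero y).symm.trans hx0) (by decide)
  | succ j' =>
    refine hy ⟨j', l, hl, hHalt, (ext12_succ y j').symm.trans hx0, ?_, ?_⟩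
    · have he : j' + 1 + l + 1 = (j' + l + 1) + 1 := by omega
      rw [he] at hx1
      exact (ext12_succ y (j' + l + 1)).symm.trans hx1
    · intro k hk1 hk2
      exact (ext12_succ y k).symm.trans (hx2 (k + 1) (by omega) (by omega))

lemma ext12_T12 {y : ℕ → Fin 2} (hy : y ∈ A12) : T12 (ext12 y) = y := by
  funext i
  have hnc : ¬ CondT (ext12 y) i := by
    rintro ⟨j₁, j₂, hji, hij, hj2i, hzj1, hzj2, hones, hl1, hl2, hev⟩
    cases j₁ with
    | zero => exact absurd ((ext12_zero y).symm.trans hzj1) (by decide)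
    | succ j' =>
      obtain ⟨a, ha⟩ := Option.isSome_iff_exists.mp hev
      have hHalt : (j₂ - (j' + 1) - 1) ∈ HaltSet :=
        Part.dom_iff_mem.mpr ⟨a, Nat.Partrec.Code.evaln_sound ha⟩
      refine hy ⟨j', j₂ - (j' + 1) - 1, hl1, hHalt,
        (ext12_succ y j').symm.trans hzj1, ?_, ?_⟩
      · have he : (j' + (j₂ - (j' + 1) - 1) + 1) + 1 = j₂ := by omega
        have := (ext12_succ y (j' + (j₂ - (j' + 1) - 1) + 1)).symm
        rw [he] at this
        exact this.trans hzj2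
      · intro k hk1 hk2
        exact (ext12_succ y k).symm.trans (hones (k + 1) (by omega) (by omega))
  rw [T12_neg hnc]
  exact ext12_succ y i

lemma A12_pre : ∀ n : ℕ, ∀ y ∈ A12, ∃ x ∈ A12, T12^[n] x = y := by
  intro n
  induction n with
  | zero => exact fun y hy => ⟨y, hy, rfl⟩
  | succ n ih =>
    intro y hy
    obtain ⟨x, hx, hxe⟩ := ih (ext12 y) (ext12_mem hy)
    exact ⟨x, hx, by rw [Function.iterate_succ_apply', hxe, ext12_T12 hy]⟩

lemma isOpen_blk (j l : ℕ) : IsOpen {z : ℕ → Fin 2 | Blk z j l} := by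
  have he : {z : ℕ → Fin 2 | Blk z j l} =
      ({z : ℕ → Fin 2 | z j = 0} ∩ {z : ℕ → Fin 2 | z (j + l + 1) = 0}) ∩
      ⋂ k ∈ Set.Ioo j (j + l + 1), {z : ℕ → Fin 2 | z k = 1} := by
    ext z
    simp only [Blk, Set.mem_setOf_eq, Set.mem_inter_iff, Set.mem_iInter, Set.mem_Ioo]
    tauto
  have hco : ∀ (i : ℕ) (c : Fin 2), IsOpen {z : ℕ → Fin 2 | z i = c} := by
    intro i c
    have hpre : {z : ℕ → Fin 2 | z i = c} = (fun z : ℕ → Fin 2 => z i) ⁻¹' {c} := rfl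
    rw [hpre]
    exact IsOpen.preimage (continuous_apply i) (isOpen_discrete _)
  rw [he]
  refine IsOpen.inter (IsOpen.inter (hco j 0) (hco (j + l + 1) 0)) ?_
  exact (Set.finite_Ioo _ _).isOpen_biInter fun k _ => hco k 1

lemma halt_evaln {l : ℕ} (h : l ∈ HaltSet) : ∃ s₀,
    (Nat.Partrec.Code.evaln s₀ (Denumerable.ofNat Nat.Partrec.Code l) 0).isSome = true := by
  obtain ⟨a, ha⟩ := Part.dom_iff_mem.mp h
  obtain ⟨s, hs⟩ := Nat.Partrec.Code.evaln_complete.mp ha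
  exact ⟨s, Option.isSome_iff_exists.mpr ⟨a, hs⟩⟩

end Aux12

/-- `⋂ₙ T₁₂ⁿ({0,1}^ℕ) = A₁₂`; in particular `ω(x) ⊆ A₁₂` for every `x`. -/
theorem stmt12 :
    (⋂ n : ℕ, T12^[n] '' Set.univ) = A12 ∧
    ∀ x : ℕ → Fin 2, omegaSet T12 x ⊆ A12 := by
  constructor
  · apply Set.Subset.antisymm
    · intro y hy
      by_contra hnA
      simp only [A12, Set.mem_setOf_eq, not_not] at hnA
      obtain ⟨j, l, hl, hHalt, h0, h1, h2⟩ := hnA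
      obtain ⟨s₀, hs⟩ := halt_evaln hHalt
      exact not_in_image12 hl hs ⟨h0, h1, h2⟩ (Set.mem_iInter.mp hy _)
    · intro y hy
      rw [Set.mem_iInter]
      intro n
      obtain ⟨x, -, hx⟩ := A12_pre n y hy
      exact ⟨x, Set.mem_univ x, hx⟩
  · intro x y hy
    by_contra hnA
    simp only [A12, Set.mem_setOf_eq, not_not] at hnA
    obtain ⟨j, l, hl, hHalt, h0, h1, h2⟩ := hnA
    obtain ⟨s₀, hs⟩ := halt_evaln hHalt
    have hU : {z : ℕ → Fin 2 | Blk z j l} ∈ nhds y :=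
      (isOpen_blk j l).mem_nhds ⟨h0, h1, h2⟩
    have hfreq := mapClusterPt_iff_frequently.mp hy _ hU
    obtain ⟨m, hm, hmem⟩ := Filter.frequently_atTop.mp hfreq (l + s₀ + 3)
    refine not_in_image12 hl hs hmem ⟨T12^[m - (l + s₀ + 3)] x, Set.mem_univ _, ?_⟩
    rw [← Function.iterate_add_apply]
    congr 1
    omega
end
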